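/- arXiv:1603.04715 — 9 statements merged into one kernel-verified Lean document; each statement's English description precedes it below -/
import Mathlib

section
/- Let $h \in C^1([0,\infty))$ be increasing with $h(0)=0$, satisfying $h(2t) \le d\, h(t)$ for all $t \ge 0$ and $c_1 h(t)/t \le h'(t) \le c_2 h(t)/t$ for all $t > 0$. Let $c > 0$ and set $c_k = c(1 - 2^{-k})$. Then there is a constant $K$ depending only on $d, c_1, c_2$ such that for all $k \ge 0$ and all $v > c_{k+1}$, $h(v) \le K\, 2^{k+1} (h(v) - h(c_k))_+$. -/
theorem level_truncation_estimate
    (h h' : ℝ → ℝ) (d c₁ c₂ : ℝ) (hc₁ : 0 < c₁) (hc₁₂ : c₁ ≤ c₂)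
    (hderiv : ∀ t > (0 : ℝ), HasDerivAt h (h' t) t)
    (hcont : ContinuousOn h (Set.Ici 0))
    (hcont' : ContinuousOn h' (Set.Ici 0))
    (hmono : MonotoneOn h (Set.Ici 0))
    (h0 : h 0 = 0)
    (hdbl : ∀ t ≥ (0 : ℝ), h (2 * t) ≤ d * h t)
    (hcomp : ∀ t > (0 : ℝ), c₁ * h t / t ≤ h' t ∧ h' t ≤ c₂ * h t / t) :
    ∃ K > (0 : ℝ), ∀ c > (0 : ℝ), ∀ k : ℕ, ∀ v : ℝ,
      c * (1 - (1 / 2 : ℝ) ^ (k + 1)) < v →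
      h v ≤ K * 2 ^ (k + 1) * max (h v - h (c * (1 - (1 / 2 : ℝ) ^ k))) 0 := by
  refine ⟨max 1 (2 / c₁), lt_of_lt_of_le one_pos (le_max_left _ _), ?_⟩
  intro c hc k v hv
  set K : ℝ := max 1 (2 / c₁) with hK
  have hK1 : (1 : ℝ) ≤ K := le_max_left _ _
  have hK2 : 2 / c₁ ≤ K := le_max_right _ _
  set a : ℝ := c * (1 - (1 / 2 : ℝ) ^ k) with ha
  set b : ℝ := c * (1 - (1 / 2 : ℝ) ^ (k + 1)) with hb
  have hq1 : (1 / 2 : ℝ) ^ k ≤ 1 := pow_le_one₀ (by norm_num) (by norm_num)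
  have hq0 : (0 : ℝ) < (1 / 2 : ℝ) ^ k := by positivity
  have hpq : (1 / 2 : ℝ) ^ (k + 1) = (1 / 2 : ℝ) ^ k / 2 := by
    rw [pow_succ]; ring
  have ha0 : 0 ≤ a := mul_nonneg hc.le (by linarith)
  have hab : a ≤ b := by
    rw [ha, hb, hpq]
    apply mul_le_mul_of_nonneg_left _ hc.le
    linarith
  have hav : a < v := lt_of_le_of_lt hab hv
  have hv0 : 0 < v := lt_of_le_of_lt ha0 hav
  have hha : h a ≤ h v := hmono ha0 hv0.le hav.le
  have hh0 : 0 ≤ h v := h0 ▸ hmono (Set.mem_Ici.mpr le_rfl) hv0.le hv0.le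
  have hha0 : 0 ≤ h a := h0 ▸ hmono (Set.mem_Ici.mpr le_rfl) ha0 ha0
  have hmax : max (h v - h a) 0 = h v - h a := max_eq_left (by linarith)
  rw [hmax]
  have h2k : (2 : ℝ) ≤ 2 ^ (k + 1) := by
    calc (2:ℝ) = 2 ^ 1 := (pow_one 2).symm
    _ ≤ 2 ^ (k + 1) := pow_le_pow_right₀ (by norm_num) (by omega)
  have h2k0 : (0 : ℝ) < 2 ^ (k + 1) := by positivity
  by_cases hcase : h a ≤ h v / 2
  · -- easy case
    have : h v / 2 ≤ h v - h a := by linarith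
    calc h v = 1 * 2 * (h v / 2) := by ring
    _ ≤ K * 2 ^ (k + 1) * (h v - h a) := by
        apply mul_le_mul (mul_le_mul hK1 h2k (by norm_num) (by linarith)) this
          (by linarith) (by positivity)
  · push_neg at hcase
    have ha0' : 0 < a := by
      rcases eq_or_lt_of_le ha0 with h' | h'
      · exfalso
        have hx := hcase
        rw [← h', h0] at hx
        linarith
      · exact h'
    -- monotonicity of g t = h t - C * t on [a, v]
    set C : ℝ := c₁ * h a / v with hC
    have hC0 : 0 ≤ C := by positivity
    have hg : MonotoneOn (fun t => h t - C * t) (Set.Icc a v) := by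
      apply monotoneOn_of_hasDerivWithinAt_nonneg (f' := fun t => h' t - C)
        (convex_Icc a v)
      · exact (hcont.mono (fun x hx => le_trans ha0 hx.1)).sub
          (continuousOn_const.mul continuousOn_id)
      · intro x hx
        rw [interior_Icc] at hx
        have hx0 : 0 < x := lt_trans ha0' hx.1
        exact (((hderiv x hx0).sub ((hasDerivAt_id x).const_mul C)).hasDerivWithinAt).congr_deriv
          (by ring)
      · intro x hx
        rw [interior_Icc] at hx
        have hx0 : 0 < x := lt_trans ha0' hx.1
        have h1 : c₁ * h x / x ≤ h' x := (hcomp x hx0).1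
        have h2 : h a ≤ h x := hmono ha0 hx0.le hx.1.le
        have h3 : C ≤ c₁ * h a / x :=
          div_le_div_of_nonneg_left (by positivity) hx0 hx.2.le
        have h4 : c₁ * h a / x ≤ c₁ * h x / x := by
          gcongr
        linarith
    have key : C * (v - a) ≤ h v - h a := by
      have := hg (Set.left_mem_Icc.mpr hav.le) (Set.right_mem_Icc.mpr hav.le) hav.le
      simp only at this
      linarith
    -- (v - a)/v ≥ 2^{-(k+1)} : v * (1/2)^(k+1) ≤ v - a
    have hfrac : v * (1 / 2 : ℝ) ^ (k + 1) ≤ v - a := by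
      have h5 : c * (1 - (1/2:ℝ)^(k+1)) * (1 - (1/2:ℝ)^(k+1)) ≤ v * (1 - (1/2:ℝ)^(k+1)) := by
        apply mul_le_mul_of_nonneg_right hv.le
        rw [hpq]; linarith
      have h6 : a ≤ c * (1 - (1/2:ℝ)^(k+1)) * (1 - (1/2:ℝ)^(k+1)) := by
        rw [ha, hpq]
        have hq2 : (0:ℝ) ≤ (1/2:ℝ)^k / 2 * ((1/2:ℝ)^k / 2) := by positivity
        nlinarith
      nlinarith
    -- combine: h v - h a ≥ C * (v - a) ≥ (c₁ * h a / v) * v * 2^{-(k+1)} = c₁ h a 2^{-(k+1)}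
    have key2 : c₁ * h a * (1/2:ℝ)^(k+1) ≤ h v - h a := by
      have : C * (v * (1/2:ℝ)^(k+1)) ≤ C * (v - a) :=
        mul_le_mul_of_nonneg_left hfrac hC0
      have heq : C * (v * (1/2:ℝ)^(k+1)) = c₁ * h a * (1/2:ℝ)^(k+1) := by
        rw [hC]; field_simp
      linarith
    have hpow : (2:ℝ)^(k+1) * (1/2:ℝ)^(k+1) = 1 := by
      rw [← mul_pow]; norm_num
    have hKc : K * c₁ ≥ 2 := by
      have := (div_le_iff₀ hc₁).mp hK2
      linarith
    have e1 : K * 2 ^ (k+1) * (c₁ * h a * (1/2:ℝ)^(k+1)) ≤ K * 2 ^ (k+1) * (h v - h a) :=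
      mul_le_mul_of_nonneg_left key2 (by positivity)
    have e2 : K * 2 ^ (k+1) * (c₁ * h a * (1/2:ℝ)^(k+1)) = K * c₁ * h a * ((2:ℝ)^(k+1) * (1/2:ℝ)^(k+1)) := by
      ring
    rw [hpow, mul_one] at e2
    have e3 : 2 * h a ≤ K * c₁ * h a := mul_le_mul_of_nonneg_right hKc hha0
    linarith
end

section
/- Let $\phi$ be a twice-differentiable N-function satisfying $c\,\phi'(t) \le t\,\phi''(t) \le C\,\phi'(t)$ for all $t > 0$ (for some $0 < c \le C$). Define $\psi'(t) = \sqrt{t\,\phi'(t)}$ and $\psi(t) = \int_0^t \psi'(s)\,ds$. Then $\psi$ also satisfies $c'\,\psi'(t) \le t\,\psi''(t) \le C'\,\psi'(t)$ for constants depending only on $c, C$, and moreover $\psi''(t) \sim \sqrt{\phi''(t)}$ uniformly in $t > 0$. -/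
theorem psi_satisfies_main_assumption
    (φ φ' φ'' ψ'' : ℝ → ℝ) (c C : ℝ) (hc : 0 < c) (hcC : c ≤ C)
    (hφ' : ∀ t > (0 : ℝ), HasDerivAt φ (φ' t) t)
    (hφ'' : ∀ t > (0 : ℝ), HasDerivAt φ' (φ'' t) t)
    (hψ'' : ∀ t > (0 : ℝ), HasDerivAt (fun s => Real.sqrt (s * φ' s)) (ψ'' t) t)
    (hpos : ∀ t > (0 : ℝ), 0 < φ' t)
    (hassum : ∀ t > (0 : ℝ), c * φ' t ≤ t * φ'' t ∧ t * φ'' t ≤ C * φ' t) :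
    ∃ c' > (0 : ℝ), ∃ C' > (0 : ℝ),
      (∀ t > (0 : ℝ), c' * Real.sqrt (t * φ' t) ≤ t * ψ'' t ∧
        t * ψ'' t ≤ C' * Real.sqrt (t * φ' t)) ∧
      (∀ t > (0 : ℝ), c' * Real.sqrt (φ'' t) ≤ ψ'' t ∧
        ψ'' t ≤ C' * Real.sqrt (φ'' t)) := by
  set m : ℝ := min c 1 with hm_def
  have hm : 0 < m := lt_min hc one_pos
  set sm : ℝ := Real.sqrt m with hsm_def
  have hsm : 0 < sm := Real.sqrt_pos.mpr hm
  have hsm1 : sm ≤ 1 := by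
    rw [hsm_def, show (1:ℝ) = Real.sqrt 1 by simp]
    exact Real.sqrt_le_sqrt (min_le_right c 1)
  have hsm2 : sm ^ 2 = m := Real.sq_sqrt hm.le
  have hC1 : (0:ℝ) < 1 + C := by linarith
  refine ⟨1/2, by norm_num, (1 + C) / (2 * sm), by positivity, ?_, ?_⟩
  all_goals intro t ht
  all_goals have pφ : 0 < φ' t := hpos t ht
  all_goals have h1 := (hassum t ht).1
  all_goals have h2 := (hassum t ht).2
  all_goals have hφ''pos : 0 < φ'' t := by nlinarith
  all_goals have hAarg : 0 < t * φ' t := mul_pos ht pφ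
  all_goals set A : ℝ := Real.sqrt (t * φ' t) with hA_def
  all_goals have hApos : 0 < A := Real.sqrt_pos.mpr hAarg
  all_goals have hA2 : A ^ 2 = t * φ' t := Real.sq_sqrt hAarg.le
  all_goals have heq : ψ'' t = (φ' t + t * φ'' t) / (2 * A) := by { have hd : HasDerivAt (fun s => s * φ' s) (1 * φ' t + t * φ'' t) t := (hasDerivAt_id t).mul (hφ'' t ht); have h3 := (hψ'' t ht).unique (hd.sqrt (ne_of_gt hAarg)); rw [h3, one_mul] }
  all_goals have hXpos : 0 < φ' t + t * φ'' t := by nlinarith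
  · -- part 1
    constructor
    · rw [heq, ← mul_div_assoc, le_div_iff₀ (by positivity)]
      nlinarith [mul_nonneg ht.le (sub_nonneg.mpr h1), mul_pos hc pφ, mul_pos ht pφ]
    · rw [heq, ← mul_div_assoc,
        show (1 + C) / (2 * sm) * A = (1 + C) * A / (2 * sm) by ring,
        div_le_div_iff₀ (by positivity) (by positivity)]
      nlinarith [mul_pos ht hXpos, mul_nonneg ht.le (sub_nonneg.mpr h2),
        mul_pos ht pφ, mul_pos (mul_pos ht hXpos) hsm]
  · -- part 2
    set B : ℝ := Real.sqrt (φ'' t) with hB_def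
    have hBpos : 0 < B := Real.sqrt_pos.mpr hφ''pos
    have hB2 : B ^ 2 = φ'' t := Real.sq_sqrt hφ''pos.le
    constructor
    · rw [heq, le_div_iff₀ (by positivity)]
      set D : ℝ := Real.sqrt (t * φ'' t) with hD_def
      set E : ℝ := Real.sqrt (φ' t) with hE_def
      have hD2 : D ^ 2 = t * φ'' t := Real.sq_sqrt (by positivity)
      have hE2 : E ^ 2 = φ' t := Real.sq_sqrt pφ.le
      have hID : A * B = D * E := by
        rw [hA_def, hB_def, hD_def, hE_def, ← Real.sqrt_mul hAarg.le,
          ← Real.sqrt_mul (by positivity : (0:ℝ) ≤ t * φ'' t)]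
        ring_nf
      have hABnn : 0 ≤ A * B := by positivity
      nlinarith [sq_nonneg (D - E)]
    · rw [heq,
        show (1 + C) / (2 * sm) * B = (1 + C) * B / (2 * sm) by ring,
        div_le_div_iff₀ (by positivity) (by positivity)]
      have key : sm * φ' t ≤ B * A := by
        have e1 : sm * φ' t = Real.sqrt (m * (φ' t) ^ 2) := by
          rw [Real.sqrt_mul hm.le, Real.sqrt_sq pφ.le, hsm_def]
        have e2 : B * A = Real.sqrt (φ'' t * (t * φ' t)) :=
          (Real.sqrt_mul hφ''pos.le _).symm
        rw [e1, e2]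
        apply Real.sqrt_le_sqrt
        have hmc : m ≤ c := min_le_left c 1
        nlinarith [mul_le_mul_of_nonneg_right h1 pφ.le,
          mul_le_mul_of_nonneg_right hmc (mul_pos pφ pφ).le]
      have k1 := mul_le_mul_of_nonneg_right h2 hsm.le
      have k2 := mul_le_mul_of_nonneg_left key hC1.le
      linarith [k1, k2]
end

section
/- Let $\phi$ be an N-function with $\Delta_2(\{\phi, \phi^*\}) < \infty$. For $\lambda \ge 0$ define the shifted function $\phi_\lambda$ by $\phi_\lambda'(t) = \frac{\phi'(\lambda + t)}{\lambda + t}\, t$. Then there is a constant $K$ depending only on $\Delta_2(\phi)$ such that $\phi_\lambda'(2t) \le K\, \phi_\lambda'(t)$ for all $t \ge 0$ and all $\lambda \ge 0$ (i.e. the $\Delta_2$ constants of the shifted functions $\phi_\lambda$ are uniformly bounded in $\lambda$). -/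
open MeasureTheory Filter

structure IsNFunctionDeriv (φ' : ℝ → ℝ) : Prop where
  mono : MonotoneOn φ' (Set.Ici 0)
  left_cont : ∀ t > (0 : ℝ), Tendsto φ' (nhdsWithin t (Set.Iio t)) (nhds (φ' t))
  zero : φ' 0 = 0
  pos : ∀ t > (0 : ℝ), 0 < φ' t
  tendsto_top : Tendsto φ' atTop atTop

noncomputable def phiOf (φ' : ℝ → ℝ) (t : ℝ) : ℝ := ∫ s in (0 : ℝ)..t, φ' s

noncomputable def phiInvDeriv (φ' : ℝ → ℝ) (t : ℝ) : ℝ :=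
  sInf {s : ℝ | 0 ≤ s ∧ t < φ' s}

noncomputable def phiConj (φ' : ℝ → ℝ) (t : ℝ) : ℝ :=
  ∫ s in (0 : ℝ)..t, phiInvDeriv φ' s

/-- Derivative of the shifted N-function: `φ'_λ(t) = φ'(λ+t)/(λ+t) · t`. -/
noncomputable def shiftedDeriv (φ' : ℝ → ℝ) (lam t : ℝ) : ℝ :=
  φ' (lam + t) / (lam + t) * t

/-- The Δ₂-constants of the shifted N-functions are bounded uniformly in the shift. -/
theorem shifted_delta2_uniform
    (φ' : ℝ → ℝ) (cφ cψ : ℝ) (hN : IsNFunctionDeriv φ')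
    (hΔ2 : ∀ t ≥ (0 : ℝ), phiOf φ' (2 * t) ≤ cφ * phiOf φ' t)
    (hΔ2conj : ∀ t ≥ (0 : ℝ), phiConj φ' (2 * t) ≤ cψ * phiConj φ' t) :
    ∃ K > (0 : ℝ), ∀ lam ≥ (0 : ℝ), ∀ t ≥ (0 : ℝ),
      shiftedDeriv φ' lam (2 * t) ≤ K * shiftedDeriv φ' lam t := by
  have hmono := hN.mono
  have hnn : ∀ s, 0 ≤ s → 0 ≤ φ' s := by
    intro s hs
    have := hmono (Set.mem_Ici.2 le_rfl) (Set.mem_Ici.2 hs) hs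
    rwa [hN.zero] at this
  have hint : ∀ a b : ℝ, 0 ≤ a → a ≤ b → IntervalIntegrable φ' volume a b := by
    intro a b ha hab
    apply MonotoneOn.intervalIntegrable
    apply hmono.mono
    rw [Set.uIcc_of_le hab]
    exact fun x hx => le_trans ha hx.1
  have hlow : ∀ a b : ℝ, 0 ≤ a → a ≤ b → φ' a * (b - a) ≤ ∫ s in a..b, φ' s := by
    intro a b ha hab
    have h : (∫ _ in a..b, φ' a) ≤ ∫ s in a..b, φ' s := by
      apply intervalIntegral.integral_mono_on hab intervalIntegrable_const (hint a b ha hab)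
      intro x hx
      exact hmono (Set.mem_Ici.2 ha) (Set.mem_Ici.2 (ha.trans hx.1)) hx.1
    simpa [intervalIntegral.integral_const, mul_comm] using h
  have hup : ∀ a b : ℝ, 0 ≤ a → a ≤ b → (∫ s in a..b, φ' s) ≤ φ' b * (b - a) := by
    intro a b ha hab
    have h : (∫ s in a..b, φ' s) ≤ ∫ _ in a..b, φ' b := by
      apply intervalIntegral.integral_mono_on hab (hint a b ha hab) intervalIntegrable_const
      intro x hx
      exact hmono (Set.mem_Ici.2 (ha.trans hx.1)) (Set.mem_Ici.2 (ha.trans hab)) hx.2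
    simpa [intervalIntegral.integral_const, mul_comm] using h
  have hphi_le : ∀ s, 0 ≤ s → phiOf φ' s ≤ s * φ' s := by
    intro s hs
    have := hup 0 s le_rfl hs
    simpa [phiOf, mul_comm] using this
  have hphi_ge0 : ∀ s, 0 ≤ s → 0 ≤ phiOf φ' s := by
    intro s hs
    have := hlow 0 s le_rfl hs
    rw [hN.zero] at this
    simpa [phiOf] using this
  have hkey : ∀ s, 0 ≤ s → 2 * s * φ' (2 * s) ≤ phiOf φ' (4 * s) := by
    intro s hs
    have h1 : phiOf φ' (4 * s) =
        (∫ x in (0:ℝ)..(2*s), φ' x) + ∫ x in (2*s)..(4*s), φ' x := by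
      rw [phiOf, ← intervalIntegral.integral_add_adjacent_intervals
        (hint 0 (2*s) le_rfl (by linarith)) (hint (2*s) (4*s) (by linarith) (by linarith))]
    have h2 := hlow (2*s) (4*s) (by linarith) (by linarith)
    have h3 : (0:ℝ) ≤ ∫ x in (0:ℝ)..(2*s), φ' x := by
      have := hlow 0 (2*s) le_rfl (by linarith)
      rw [hN.zero] at this
      simpa using this
    nlinarith [h2, h3]
  -- cφ > 0
  have hc : 0 < cφ := by
    have h1 : φ' 1 * 1 ≤ phiOf φ' 2 := by
      have := hkey (1/2) (by norm_num)
      norm_num at this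
      linarith
    have h2 := hΔ2 1 zero_le_one
    norm_num at h2
    have h3 : phiOf φ' 1 ≤ 1 * φ' 1 := hphi_le 1 zero_le_one
    have h4 : 0 < φ' 1 := hN.pos 1 one_pos
    have h5 : 0 ≤ phiOf φ' 1 := hphi_ge0 1 zero_le_one
    nlinarith
  -- doubling for φ'
  have hdouble : ∀ s, 0 < s → φ' (2 * s) ≤ cφ ^ 2 / 2 * φ' s := by
    intro s hs
    have h1 := hkey s hs.le
    have h2 := hΔ2 (2 * s) (by linarith)
    have h2' : phiOf φ' (4 * s) ≤ cφ * phiOf φ' (2 * s) := by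
      have : (2:ℝ) * (2 * s) = 4 * s := by ring
      rwa [this] at h2
    have h3 := hΔ2 s hs.le
    have h4 := hphi_le s hs.le
    have hps := hnn s hs.le
    nlinarith [hphi_ge0 (2*s) (by linarith : (0:ℝ) ≤ 2*s)]
  refine ⟨cφ ^ 2 + 2, by positivity, ?_⟩
  intro lam hlam t ht
  rcases eq_or_lt_of_le ht with h0 | ht
  · simp [← h0, shiftedDeriv]
  · have ha : 0 < lam + t := by linarith
    have hb : 0 < lam + 2 * t := by linarith
    have hab : lam + 2 * t ≤ 2 * (lam + t) := by linarith
    have hX : φ' (lam + 2 * t) ≤ cφ ^ 2 / 2 * φ' (lam + t) := by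
      calc φ' (lam + 2 * t) ≤ φ' (2 * (lam + t)) :=
            hmono (Set.mem_Ici.2 hb.le) (Set.mem_Ici.2 (by linarith)) hab
        _ ≤ cφ ^ 2 / 2 * φ' (lam + t) := hdouble _ ha
    have hY : 0 ≤ φ' (lam + t) := hnn _ ha.le
    have hXnn : 0 ≤ φ' (lam + 2 * t) := hnn _ hb.le
    rw [shiftedDeriv, shiftedDeriv,
      show φ' (lam + 2 * t) / (lam + 2 * t) * (2 * t)
          = φ' (lam + 2 * t) * (2 * t) / (lam + 2 * t) by ring,
      show (cφ ^ 2 + 2) * (φ' (lam + t) / (lam + t) * t)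
          = (cφ ^ 2 + 2) * (φ' (lam + t) * t) / (lam + t) by ring,
      div_le_div_iff₀ hb ha]
    have h1 := mul_le_mul_of_nonneg_right hX
      (by nlinarith : (0:ℝ) ≤ 2 * t * (lam + t))
    have h2 : cφ ^ 2 * φ' (lam + t) * t * (lam + t)
        ≤ cφ ^ 2 * φ' (lam + t) * t * (lam + 2 * t) :=
      mul_le_mul_of_nonneg_left (by linarith)
        (mul_nonneg (mul_nonneg (by positivity) hY) ht.le)
    have h3 : 0 ≤ 2 * (φ' (lam + t) * t) * (lam + 2 * t) := by positivity
    nlinarith [h1, h2, h3]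
end

section
/- Let $\phi$ be an N-function with $\Delta_2(\{\phi, \phi^*\}) < \infty$ and let $\phi_\lambda$ be the shifted N-function with $\phi_\lambda'(t) = \frac{\phi'(\lambda+t)}{\lambda+t}t$. Then $\phi_\lambda(k\lambda) \sim k^2 \phi(\lambda)$ uniformly in $0 \le k \le 1$ and $\lambda > 0$, with constants depending only on the $\Delta_2$ constants of $\phi$ and $\phi^*$. -/
open MeasureTheory Filter

/-- The shifted N-function `φ_λ(t) = ∫₀ᵗ φ'_λ(s) ds`. -/
noncomputable def shiftedPhi (φ' : ℝ → ℝ) (lam t : ℝ) : ℝ :=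
  ∫ s in (0 : ℝ)..t, shiftedDeriv φ' lam s

section Aux

variable {φ' : ℝ → ℝ}

lemma phi'_nonneg (hN : IsNFunctionDeriv φ') {s : ℝ} (hs : 0 ≤ s) : 0 ≤ φ' s := by
  have := hN.mono (Set.mem_Ici.2 le_rfl) (Set.mem_Ici.2 hs) hs
  simpa [hN.zero] using this

lemma phi'_intble (hN : IsNFunctionDeriv φ') {a b : ℝ} (ha : 0 ≤ a) (hab : a ≤ b) :
    IntervalIntegrable φ' volume a b := by
  apply MonotoneOn.intervalIntegrable
  intro x hx y hy hxy
  rw [Set.uIcc_of_le hab] at hx hy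
  exact hN.mono (Set.mem_Ici.2 (ha.trans hx.1)) (Set.mem_Ici.2 (ha.trans hy.1)) hxy

lemma integral_ge_left (hN : IsNFunctionDeriv φ') {a b : ℝ} (ha : 0 ≤ a) (hab : a ≤ b) :
    (b - a) * φ' a ≤ ∫ s in a..b, φ' s := by
  have h := intervalIntegral.integral_mono_on hab (intervalIntegrable_const (c := φ' a))
    (phi'_intble hN ha hab)
    (fun x hx => hN.mono (Set.mem_Ici.2 ha) (Set.mem_Ici.2 (ha.trans hx.1)) hx.1)
  simpa [smul_eq_mul] using h

lemma integral_le_right (hN : IsNFunctionDeriv φ') {a b : ℝ} (ha : 0 ≤ a) (hab : a ≤ b) :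
    (∫ s in a..b, φ' s) ≤ (b - a) * φ' b := by
  have h := intervalIntegral.integral_mono_on hab (phi'_intble hN ha hab)
    (intervalIntegrable_const (c := φ' b))
    (fun x hx => hN.mono (Set.mem_Ici.2 (ha.trans hx.1)) (Set.mem_Ici.2 (ha.trans hab)) hx.2)
  simpa [smul_eq_mul] using h

lemma phiOf_nonneg (hN : IsNFunctionDeriv φ') {t : ℝ} (ht : 0 ≤ t) : 0 ≤ phiOf φ' t := by
  have := intervalIntegral.integral_nonneg (μ := volume) ht (fun x hx => phi'_nonneg hN hx.1)
  simpa [phiOf] using this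

lemma phiOf_add (hN : IsNFunctionDeriv φ') {a b : ℝ} (ha : 0 ≤ a) (hab : a ≤ b) :
    phiOf φ' b = phiOf φ' a + ∫ s in a..b, φ' s := by
  rw [phiOf, phiOf,
    ← intervalIntegral.integral_add_adjacent_intervals (phi'_intble hN le_rfl ha)
      (phi'_intble hN ha hab)]

lemma phiOf_pos (hN : IsNFunctionDeriv φ') {t : ℝ} (ht : 0 < t) : 0 < phiOf φ' t := by
  have h1 : phiOf φ' t = phiOf φ' (t / 2) + ∫ s in (t/2)..t, φ' s :=
    phiOf_add hN (by linarith) (by linarith)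
  have h2 := integral_ge_left hN (a := t/2) (b := t) (by linarith) (by linarith)
  have h3 := phiOf_nonneg hN (t := t/2) (by linarith)
  have h4 := hN.pos (t/2) (by linarith)
  nlinarith

lemma phiOf_le (hN : IsNFunctionDeriv φ') {t : ℝ} (ht : 0 ≤ t) :
    phiOf φ' t ≤ t * φ' t := by
  have := integral_le_right hN (a := 0) (b := t) le_rfl ht
  simpa [phiOf] using this

lemma cphi_pos (hN : IsNFunctionDeriv φ')
    (hΔ2 : ∀ t ≥ (0 : ℝ), phiOf φ' (2 * t) ≤ cφ * phiOf φ' t) : 0 < cφ := by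
  have h1 := hΔ2 1 (by norm_num)
  norm_num at h1
  have h2 : (0:ℝ) < phiOf φ' 2 := phiOf_pos hN (by norm_num)
  have h3 : (0:ℝ) < phiOf φ' 1 := phiOf_pos hN (by norm_num)
  nlinarith

lemma key_upper (hN : IsNFunctionDeriv φ')
    (hΔ2 : ∀ t ≥ (0 : ℝ), phiOf φ' (2 * t) ≤ cφ * phiOf φ' t)
    {lam : ℝ} (hlam : 0 < lam) :
    lam * φ' (2 * lam) ≤ cφ ^ 2 / 2 * phiOf φ' lam := by
  have hc := cphi_pos hN hΔ2
  have h1 : phiOf φ' (4 * lam) = phiOf φ' (2 * lam) + ∫ s in (2*lam)..(4*lam), φ' s :=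
    phiOf_add hN (by linarith) (by linarith)
  have h2 := integral_ge_left hN (a := 2*lam) (b := 4*lam) (by linarith) (by linarith)
  have h3 : phiOf φ' (4 * lam) ≤ cφ * phiOf φ' (2 * lam) := by
    have := hΔ2 (2 * lam) (by linarith)
    calc phiOf φ' (4 * lam) = phiOf φ' (2 * (2 * lam)) := by ring_nf
      _ ≤ cφ * phiOf φ' (2 * lam) := this
  have h4 : phiOf φ' (2 * lam) ≤ cφ * phiOf φ' lam := hΔ2 lam hlam.le
  have h5 : 0 ≤ phiOf φ' (2 * lam) := phiOf_nonneg hN (by linarith)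
  nlinarith

end Aux

/-- `φ_λ(kλ) ∼ k² φ(λ)` uniformly in `0 ≤ k ≤ 1` and `λ > 0`. -/
theorem shifted_phi_at_k_lambda
    (φ' : ℝ → ℝ) (cφ cψ : ℝ) (hN : IsNFunctionDeriv φ')
    (hΔ2 : ∀ t ≥ (0 : ℝ), phiOf φ' (2 * t) ≤ cφ * phiOf φ' t)
    (hΔ2conj : ∀ t ≥ (0 : ℝ), phiConj φ' (2 * t) ≤ cψ * phiConj φ' t) :
    ∃ c₁ > (0 : ℝ), ∃ c₂ > (0 : ℝ), ∀ k ∈ Set.Icc (0 : ℝ) 1, ∀ lam > (0 : ℝ),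
      c₁ * (k ^ 2 * phiOf φ' lam) ≤ shiftedPhi φ' lam (k * lam) ∧
      shiftedPhi φ' lam (k * lam) ≤ c₂ * (k ^ 2 * phiOf φ' lam) := by
  have hc := cphi_pos hN hΔ2
  refine ⟨1/4, by norm_num, cφ ^ 2 / 4, by positivity, ?_⟩
  rintro k ⟨hk0, hk1⟩ lam hlam
  set b := k * lam with hb
  have hb0 : 0 ≤ b := mul_nonneg hk0 hlam.le
  have hble : b ≤ lam := by nlinarith
  -- integrability of the shifted derivative
  have hmono : MonotoneOn (shiftedDeriv φ' lam) (Set.uIcc 0 b) := by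
    rw [Set.uIcc_of_le hb0]
    intro x hx y hy hxy
    have hx0 : (0:ℝ) ≤ x := hx.1
    have hy0 : (0:ℝ) ≤ y := hy.1
    have h1 : φ' (lam + x) ≤ φ' (lam + y) :=
      hN.mono (Set.mem_Ici.2 (by linarith)) (Set.mem_Ici.2 (by linarith)) (by linarith)
    have h2 : x / (lam + x) ≤ y / (lam + y) := by
      rw [div_le_div_iff₀ (by linarith) (by linarith)]
      nlinarith
    have h3 : 0 ≤ x / (lam + x) := div_nonneg hx0 (by linarith)
    have h4 : 0 ≤ φ' (lam + y) := phi'_nonneg hN (by linarith)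
    have := mul_le_mul h1 h2 h3 h4
    simpa [shiftedDeriv, div_mul_eq_mul_div, mul_div_assoc] using this
  have hint : IntervalIntegrable (shiftedDeriv φ' lam) volume 0 b :=
    hmono.intervalIntegrable
  have hintlin : ∀ c : ℝ, IntervalIntegrable (fun s => c * s) volume 0 b :=
    fun c => IntervalIntegrable.const_mul intervalIntegral.intervalIntegrable_id c
  have hlinint : ∀ c : ℝ, (∫ s in (0:ℝ)..b, c * s) = c * (b ^ 2 / 2) := by
    intro c
    rw [intervalIntegral.integral_const_mul, integral_id]
    ring
  constructor
  · -- lower bound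
    have hlow : ∀ x ∈ Set.Icc (0:ℝ) b, φ' lam / (2 * lam) * x ≤ shiftedDeriv φ' lam x := by
      rintro x ⟨hx0, hxb⟩
      have h1 : φ' lam ≤ φ' (lam + x) :=
        hN.mono (Set.mem_Ici.2 hlam.le) (Set.mem_Ici.2 (by linarith)) (by linarith)
      have h2 : φ' lam / (2 * lam) ≤ φ' (lam + x) / (lam + x) := by
        apply div_le_div₀ (phi'_nonneg hN (by linarith)) h1 (by linarith)
        linarith
      exact mul_le_mul_of_nonneg_right h2 hx0
    have h := intervalIntegral.integral_mono_on hb0 (hintlin _) hint hlow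
    rw [hlinint] at h
    have hφl := hN.pos lam hlam
    have hphile := phiOf_le hN hlam.le
    have heq : φ' lam / (2 * lam) * (b ^ 2 / 2) = k ^ 2 * (lam * φ' lam) / 4 := by
      rw [hb]; field_simp; ring
    rw [heq] at h
    calc 1/4 * (k ^ 2 * phiOf φ' lam) ≤ k ^ 2 * (lam * φ' lam) / 4 := by nlinarith
      _ ≤ shiftedPhi φ' lam b := h
  · -- upper bound
    have hup : ∀ x ∈ Set.Icc (0:ℝ) b, shiftedDeriv φ' lam x ≤ φ' (2 * lam) / lam * x := by
      rintro x ⟨hx0, hxb⟩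
      have h1 : φ' (lam + x) ≤ φ' (2 * lam) :=
        hN.mono (Set.mem_Ici.2 (by linarith)) (Set.mem_Ici.2 (by linarith)) (by linarith)
      have h2 : φ' (lam + x) / (lam + x) ≤ φ' (2 * lam) / lam := by
        apply div_le_div₀ (phi'_nonneg hN (by linarith)) h1 hlam
        linarith
      exact mul_le_mul_of_nonneg_right h2 hx0
    have h := intervalIntegral.integral_mono_on hb0 hint (hintlin _) hup
    rw [hlinint] at h
    have hkey := key_upper hN hΔ2 hlam
    have heq : φ' (2 * lam) / lam * (b ^ 2 / 2) = k ^ 2 * (lam * φ' (2 * lam)) / 2 := by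
      rw [hb]; field_simp
    rw [heq] at h
    calc shiftedPhi φ' lam b ≤ k ^ 2 * (lam * φ' (2 * lam)) / 2 := h
      _ ≤ cφ ^ 2 / 4 * (k ^ 2 * phiOf φ' lam) := by nlinarith
end

section
/- Let $\phi$ be an N-function with $\Delta_2(\{\phi, \phi^*\}) < \infty$ satisfying $\phi'(t) \sim t\phi''(t)$. For $P, Q \in \mathbb{R}^{n\times m}$ define $\phi'_{|P|}(t) = \frac{\phi'(|P| + t)}{|P| + t} t$. Then $\phi''(|P| + |Q|)\,|P - Q| \sim \phi'_{|P|}(|P - Q|)$ uniformly in $P, Q$ (not both zero), with constants depending only on the $\Delta_2$ constants and the constants in the assumption. -/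
open MeasureTheory Filter

lemma phiDeriv_doubling (φ' φ'' : ℝ → ℝ) (a₂ : ℝ)
    (hderiv : ∀ t > (0 : ℝ), HasDerivAt φ' (φ'' t) t)
    (hub : ∀ t > (0 : ℝ), t * φ'' t ≤ a₂ * φ' t)
    {t : ℝ} (ht : 0 < t) : φ' (2 * t) ≤ 2 ^ a₂ * φ' t := by
  set f : ℝ → ℝ := fun s => φ' s * s ^ (-a₂) with hf
  have key : ∀ x : ℝ, 0 < x →
      HasDerivAt f (φ'' x * x ^ (-a₂) + φ' x * (-a₂ * x ^ (-a₂ - 1))) x := by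
    intro x hx0
    have h1 := (hderiv x hx0).mul (Real.hasDerivAt_rpow_const (p := -a₂) (Or.inl hx0.ne'))
    exact h1.congr_deriv (by ring)
  have hanti : AntitoneOn f (Set.Ici t) := by
    apply antitoneOn_of_deriv_nonpos (convex_Ici t)
    · intro x hx
      have hx0 : 0 < x := lt_of_lt_of_le ht hx
      exact (key x hx0).differentiableAt.continuousAt.continuousWithinAt
    · intro x hx
      rw [interior_Ici] at hx
      exact (key x (ht.trans hx)).differentiableAt.differentiableWithinAt
    · intro x hx
      rw [interior_Ici] at hx
      have hx0 : 0 < x := ht.trans hx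
      rw [(key x hx0).deriv]
      have e : φ'' x * x ^ (-a₂) + φ' x * (-a₂ * x ^ (-a₂ - 1)) =
          x ^ (-a₂ - 1) * (x * φ'' x - a₂ * φ' x) := by
        have h1 : x ^ (-a₂) = x ^ (-a₂ - 1) * x := by
          rw [← Real.rpow_add_one hx0.ne' (-a₂ - 1)]
          ring_nf
        rw [h1]; ring
      rw [e]
      exact mul_nonpos_of_nonneg_of_nonpos (Real.rpow_nonneg hx0.le _)
        (sub_nonpos.2 (hub x hx0))
  have h2t : (0 : ℝ) < 2 * t := by linarith
  have hle : f (2 * t) ≤ f t :=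
    hanti (Set.mem_Ici.2 le_rfl) (Set.mem_Ici.2 (by linarith)) (by linarith)
  have hone : t ^ (-a₂) * t ^ a₂ = 1 := by
    rw [← Real.rpow_add ht]; simp
  calc φ' (2 * t) = φ' (2 * t) * (2 * t) ^ (-a₂) * (2 * t) ^ a₂ := by
        rw [mul_assoc, ← Real.rpow_add h2t, neg_add_cancel, Real.rpow_zero, mul_one]
    _ ≤ φ' t * t ^ (-a₂) * (2 * t) ^ a₂ :=
        mul_le_mul_of_nonneg_right hle (Real.rpow_nonneg h2t.le _)
    _ = 2 ^ a₂ * φ' t := by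
        rw [Real.mul_rpow (by norm_num) ht.le]
        calc φ' t * t ^ (-a₂) * (2 ^ a₂ * t ^ a₂)
            = 2 ^ a₂ * φ' t * (t ^ (-a₂) * t ^ a₂) := by ring
          _ = 2 ^ a₂ * φ' t := by rw [hone, mul_one]

lemma ratio_comp (φ' φ'' : ℝ → ℝ) (a₂ : ℝ)
    (hmono : MonotoneOn φ' (Set.Ici 0))
    (hderiv : ∀ t > (0 : ℝ), HasDerivAt φ' (φ'' t) t)
    (hub : ∀ t > (0 : ℝ), t * φ'' t ≤ a₂ * φ' t)
    (hpos : ∀ t > (0 : ℝ), 0 < φ' t)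
    {s u : ℝ} (hs : 0 < s) (hu : 0 < u) (h1 : u ≤ 2 * s) (h2 : s ≤ 2 * u) :
    φ' u / u ≤ 2 ^ (a₂ + 1) * (φ' s / s) := by
  have h3 : φ' u ≤ 2 ^ a₂ * φ' s :=
    le_trans (hmono (Set.mem_Ici.2 hu.le) (Set.mem_Ici.2 (by linarith)) h1)
      (phiDeriv_doubling φ' φ'' a₂ hderiv hub hs)
  have h4 : u⁻¹ ≤ 2 / s := by
    rw [inv_eq_one_div, div_le_div_iff₀ hu hs]
    linarith
  have h5 : φ' u / u ≤ (2 ^ a₂ * φ' s) * (2 / s) := by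
    rw [div_eq_mul_inv]
    exact mul_le_mul h3 h4 (inv_nonneg.2 hu.le) (mul_nonneg (Real.rpow_nonneg (by norm_num) _) (hpos s hs).le)
  calc φ' u / u ≤ (2 ^ a₂ * φ' s) * (2 / s) := h5
    _ = 2 ^ (a₂ + 1) * (φ' s / s) := by
        rw [Real.rpow_add_one (by norm_num : (2:ℝ) ≠ 0)]
        ring

/-- `φ''(|P|+|Q|)|P−Q| ∼ φ'_{|P|}(|P−Q|)` uniformly in matrices `P, Q` (Frobenius norm,
realized as the Euclidean norm on the entries). -/
theorem shifted_deriv_equiv_second_deriv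
    (n m : ℕ) (φ' φ'' : ℝ → ℝ) (cφ cψ a₁ a₂ : ℝ) (hN : IsNFunctionDeriv φ')
    (hΔ2 : ∀ t ≥ (0 : ℝ), phiOf φ' (2 * t) ≤ cφ * phiOf φ' t)
    (hΔ2conj : ∀ t ≥ (0 : ℝ), phiConj φ' (2 * t) ≤ cψ * phiConj φ' t)
    (hderiv : ∀ t > (0 : ℝ), HasDerivAt φ' (φ'' t) t)
    (ha₁ : 0 < a₁)
    (hassum : ∀ t > (0 : ℝ), a₁ * φ' t ≤ t * φ'' t ∧ t * φ'' t ≤ a₂ * φ' t) :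
    ∃ c₁ > (0 : ℝ), ∃ c₂ > (0 : ℝ),
      ∀ P Q : EuclideanSpace ℝ (Fin n × Fin m), ¬(P = 0 ∧ Q = 0) →
        c₁ * shiftedDeriv φ' (‖P‖) (‖P - Q‖) ≤ φ'' (‖P‖ + ‖Q‖) * ‖P - Q‖ ∧
        φ'' (‖P‖ + ‖Q‖) * ‖P - Q‖ ≤ c₂ * shiftedDeriv φ' (‖P‖) (‖P - Q‖) := by
  have hub : ∀ t > (0 : ℝ), t * φ'' t ≤ a₂ * φ' t := fun t ht => (hassum t ht).2
  have ha₂ : 0 < a₂ := by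
    have h1 := hassum 1 one_pos
    have h2 := hN.pos 1 one_pos
    nlinarith [h1.1, h1.2]
  have hpow : (0 : ℝ) < 2 ^ (a₂ + 1) := Real.rpow_pos_of_pos (by norm_num) _
  refine ⟨a₁ / 2 ^ (a₂ + 1), by positivity, a₂ * 2 ^ (a₂ + 1), by positivity, ?_⟩
  intro P Q _
  set lam := ‖P‖ with hlam
  set mu := ‖Q‖ with hmu
  set d := ‖P - Q‖ with hd
  have hlam0 : 0 ≤ lam := norm_nonneg _
  have hmu0 : 0 ≤ mu := norm_nonneg _
  have hd0 : 0 ≤ d := norm_nonneg _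
  rcases eq_or_lt_of_le hd0 with hdz | hdpos
  · simp [shiftedDeriv, ← hdz]
  · have htri : d ≤ lam + mu := norm_sub_le P Q
    have htri2 : mu ≤ lam + d := by
      calc mu = ‖P - (P - Q)‖ := by rw [hmu]; congr 1; abel
        _ ≤ lam + d := norm_sub_le _ _
    set s := lam + mu with hs'
    set u := lam + d with hu'
    have hs : 0 < s := lt_of_lt_of_le hdpos htri
    have hu : 0 < u := by positivity
    have h1 : u ≤ 2 * s := by simp only [hs', hu']; linarith
    have h2 : s ≤ 2 * u := by simp only [hs', hu']; linarith
    have hratio1 : φ' u / u ≤ 2 ^ (a₂ + 1) * (φ' s / s) :=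
      ratio_comp φ' φ'' a₂ hN.mono hderiv hub hN.pos hs hu h1 h2
    have hratio2 : φ' s / s ≤ 2 ^ (a₂ + 1) * (φ' u / u) :=
      ratio_comp φ' φ'' a₂ hN.mono hderiv hub hN.pos hu hs h2 h1
    have hlb : a₁ * (φ' s / s) ≤ φ'' s := by
      rw [mul_div_assoc', div_le_iff₀ hs]
      linarith [(hassum s hs).1, mul_comm s (φ'' s)]
    have hub' : φ'' s ≤ a₂ * (φ' s / s) := by
      rw [mul_div_assoc', le_div_iff₀ hs]
      linarith [(hassum s hs).2, mul_comm s (φ'' s)]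
    have huphi : 0 ≤ φ' u / u := div_nonneg (hN.pos u hu).le hu.le
    have hsphi : 0 ≤ φ' s / s := div_nonneg (hN.pos s hs).le hs.le
    have hshift : shiftedDeriv φ' lam d = φ' u / u * d := rfl
    constructor
    · rw [hshift]
      have key : a₁ / 2 ^ (a₂ + 1) * (φ' u / u) ≤ φ'' s := by
        have : a₁ / 2 ^ (a₂ + 1) * (φ' u / u) ≤ a₁ / 2 ^ (a₂ + 1) * (2 ^ (a₂ + 1) * (φ' s / s)) :=
          mul_le_mul_of_nonneg_left hratio1 (by positivity)
        calc a₁ / 2 ^ (a₂ + 1) * (φ' u / u)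
            ≤ a₁ / 2 ^ (a₂ + 1) * (2 ^ (a₂ + 1) * (φ' s / s)) := this
          _ = a₁ * (φ' s / s) := by field_simp
          _ ≤ φ'' s := hlb
      calc a₁ / 2 ^ (a₂ + 1) * (φ' u / u * d)
          = a₁ / 2 ^ (a₂ + 1) * (φ' u / u) * d := by ring
        _ ≤ φ'' s * d := mul_le_mul_of_nonneg_right key hdpos.le
    · rw [hshift]
      have key : φ'' s ≤ a₂ * 2 ^ (a₂ + 1) * (φ' u / u) := by
        calc φ'' s ≤ a₂ * (φ' s / s) := hub'
          _ ≤ a₂ * (2 ^ (a₂ + 1) * (φ' u / u)) :=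
              mul_le_mul_of_nonneg_left hratio2 ha₂.le
          _ = a₂ * 2 ^ (a₂ + 1) * (φ' u / u) := by ring
      calc φ'' s * d ≤ a₂ * 2 ^ (a₂ + 1) * (φ' u / u) * d :=
            mul_le_mul_of_nonneg_right key hdpos.le
        _ = a₂ * 2 ^ (a₂ + 1) * (φ' u / u * d) := by ring
end

section
/- Let $\phi$ be an N-function with $\Delta_2(\{\phi,\phi^*\}) < \infty$ satisfying $\phi'(t) \sim t\phi''(t)$. Define $\phi'_\lambda(t) = \frac{\phi'(\lambda+t)}{\lambda+t} t$. Then there is a constant $K$ such that for all $P, Q, R \in \mathbb{R}^{n\times m}$: $\phi'_{|P|}(|P - Q|) \le K\big(\phi'_{|R|}(|P - R|) + \phi'_{|R|}(|Q - R|)\big)$. -/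
open MeasureTheory Filter

/-- Doubling estimate for `φ'` from `t φ''(t) ≤ a₂ φ'(t)`. -/
lemma phi'_double (φ' φ'' : ℝ → ℝ) (a₂ : ℝ)
    (hderiv : ∀ t > (0 : ℝ), HasDerivAt φ' (φ'' t) t)
    (hbd : ∀ t > (0 : ℝ), t * φ'' t ≤ a₂ * φ' t) :
    ∀ s > (0 : ℝ), φ' (2 * s) ≤ 2 ^ a₂ * φ' s := by
  intro s hs
  set g : ℝ → ℝ := fun x => φ' x * x ^ (-a₂) with hg
  have hderg : ∀ x ∈ Set.Ioo s (2 * s),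
      HasDerivAt g (φ'' x * x ^ (-a₂) + φ' x * (-a₂ * x ^ (-a₂ - 1))) x := by
    intro x hx
    have hx0 : 0 < x := lt_trans hs hx.1
    exact (hderiv x hx0).mul (Real.hasDerivAt_rpow_const (Or.inl hx0.ne'))
  have hanti : AntitoneOn g (Set.Icc s (2 * s)) := by
    apply antitoneOn_of_deriv_nonpos (convex_Icc _ _)
    · intro x hx
      have hx0 : 0 < x := lt_of_lt_of_le hs hx.1
      exact ((hderiv x hx0).continuousAt.mul
        (Real.continuousAt_rpow_const x (-a₂) (Or.inl hx0.ne'))).continuousWithinAt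
    · rw [interior_Icc]
      intro x hx
      exact ((hderg x hx).differentiableAt).differentiableWithinAt
    · rw [interior_Icc]
      intro x hx
      have hx0 : 0 < x := lt_trans hs hx.1
      rw [(hderg x hx).deriv]
      have e1 : x ^ (-a₂) = x * x ^ (-a₂ - 1) := by
        rw [show -a₂ - 1 = -a₂ + (-1) by ring, Real.rpow_add hx0, Real.rpow_neg_one]
        field_simp
      rw [e1]
      have h1 := hbd x hx0
      have h2 : (0 : ℝ) ≤ x ^ (-a₂ - 1) := Real.rpow_nonneg hx0.le _
      nlinarith [mul_le_mul_of_nonneg_right h1 h2]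
  have h2s : (0 : ℝ) < 2 * s := by linarith
  have key : φ' (2 * s) * (2 * s) ^ (-a₂) ≤ φ' s * s ^ (-a₂) :=
    hanti (Set.mem_Icc.2 ⟨le_refl s, by linarith⟩)
      (Set.mem_Icc.2 ⟨by linarith, le_refl _⟩) (by linarith)
  have e1 : (2 * s) ^ (-a₂) * (2 * s) ^ a₂ = 1 := by
    rw [← Real.rpow_add h2s]; simp
  have e2 : s ^ (-a₂) * s ^ a₂ = 1 := by
    rw [← Real.rpow_add hs]; simp
  have hrp : (0 : ℝ) ≤ (2 * s) ^ a₂ := Real.rpow_nonneg h2s.le _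
  calc φ' (2 * s) = φ' (2 * s) * (2 * s) ^ (-a₂) * (2 * s) ^ a₂ := by
        rw [mul_assoc, e1, mul_one]
    _ ≤ φ' s * s ^ (-a₂) * (2 * s) ^ a₂ := mul_le_mul_of_nonneg_right key hrp
    _ = φ' s * s ^ (-a₂) * (2 ^ a₂ * s ^ a₂) := by
        rw [Real.mul_rpow (by norm_num) hs.le]
    _ = 2 ^ a₂ * φ' s * (s ^ (-a₂) * s ^ a₂) := by ring
    _ = 2 ^ a₂ * φ' s := by rw [e2, mul_one]

/-- `shiftedDeriv` is monotone in `t`. -/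
lemma shiftedDeriv_mono_t (φ' : ℝ → ℝ) (hmono : MonotoneOn φ' (Set.Ici 0))
    (hnn : ∀ t ≥ (0 : ℝ), 0 ≤ φ' t) {l t t' : ℝ} (hl : 0 ≤ l) (ht : 0 < t) (htt : t ≤ t') :
    shiftedDeriv φ' l t ≤ shiftedDeriv φ' l t' := by
  unfold shiftedDeriv
  have h1 : φ' (l + t) ≤ φ' (l + t') :=
    hmono (Set.mem_Ici.2 (by linarith)) (Set.mem_Ici.2 (by linarith)) (by linarith)
  have h2 : t / (l + t) ≤ t' / (l + t') := by
    rw [div_le_div_iff₀ (by linarith) (by linarith)]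
    nlinarith
  rw [div_mul_eq_mul_div, mul_div_assoc, div_mul_eq_mul_div, mul_div_assoc]
  exact mul_le_mul h1 h2 (by positivity) (hnn _ (by linarith))

/-- Shift-change estimate: `φ'_{|P|}(|P−Q|) ≲ φ'_{|R|}(|P−R|) + φ'_{|R|}(|Q−R|)`. -/
theorem shift_change_estimate
    (n m : ℕ) (φ' φ'' : ℝ → ℝ) (cφ cψ a₁ a₂ : ℝ) (hN : IsNFunctionDeriv φ')
    (hΔ2 : ∀ t ≥ (0 : ℝ), phiOf φ' (2 * t) ≤ cφ * phiOf φ' t)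
    (hΔ2conj : ∀ t ≥ (0 : ℝ), phiConj φ' (2 * t) ≤ cψ * phiConj φ' t)
    (hderiv : ∀ t > (0 : ℝ), HasDerivAt φ' (φ'' t) t)
    (ha₁ : 0 < a₁)
    (hassum : ∀ t > (0 : ℝ), a₁ * φ' t ≤ t * φ'' t ∧ t * φ'' t ≤ a₂ * φ' t) :
    ∃ K > (0 : ℝ), ∀ P Q R : EuclideanSpace ℝ (Fin n × Fin m),
      shiftedDeriv φ' (‖P‖) (‖P - Q‖) ≤
        K * (shiftedDeriv φ' (‖R‖) (‖P - R‖) + shiftedDeriv φ' (‖R‖) (‖Q - R‖)) := by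
  have hnn : ∀ t ≥ (0 : ℝ), 0 ≤ φ' t := by
    intro t ht
    rcases eq_or_lt_of_le ht with h | h
    · rw [← h, hN.zero]
    · exact (hN.pos t h).le
  have hdbl := phi'_double φ' φ'' a₂ hderiv (fun t ht => (hassum t ht).2)
  set C : ℝ := 2 ^ (a₂ + 1) with hCdef
  have hC : 0 < C := Real.rpow_pos_of_pos (by norm_num) _
  have hC2 : C = 2 * 2 ^ a₂ := by
    rw [hCdef, Real.rpow_add (by norm_num), Real.rpow_one]; ring
  have h2a : (0 : ℝ) ≤ 2 ^ a₂ := Real.rpow_nonneg (by norm_num) _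
  have fnn : ∀ l t : ℝ, 0 ≤ l → 0 ≤ t → 0 ≤ shiftedDeriv φ' l t := by
    intro l t hl ht
    unfold shiftedDeriv
    have := hnn (l + t) (by linarith)
    positivity
  -- Claim A: if 0 < u ≤ 2 M then f l u ≤ C f l M
  have claimA : ∀ l u M : ℝ, 0 ≤ l → 0 < u → 0 < M → u ≤ 2 * M →
      shiftedDeriv φ' l u ≤ C * shiftedDeriv φ' l M := by
    intro l u M hl hu hM huM
    have step1 : shiftedDeriv φ' l u ≤ shiftedDeriv φ' l (2 * M) :=
      shiftedDeriv_mono_t φ' hN.mono hnn hl hu huM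
    have step2 : shiftedDeriv φ' l (2 * M) ≤ C * shiftedDeriv φ' l M := by
      have hA : φ' (l + 2 * M) ≤ 2 ^ a₂ * φ' (l + M) := by
        calc φ' (l + 2 * M) ≤ φ' (2 * (l + M)) :=
              hN.mono (Set.mem_Ici.2 (by linarith)) (Set.mem_Ici.2 (by linarith)) (by linarith)
          _ ≤ 2 ^ a₂ * φ' (l + M) := hdbl (l + M) (by linarith)
      have hB : 0 ≤ φ' (l + M) := hnn _ (by linarith)
      have e1 : shiftedDeriv φ' l (2 * M) = φ' (l + 2 * M) * (2 * M) / (l + 2 * M) := by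
        unfold shiftedDeriv; ring
      have e2 : C * shiftedDeriv φ' l M = C * φ' (l + M) * M / (l + M) := by
        unfold shiftedDeriv; ring
      rw [e1, e2, div_le_div_iff₀ (by linarith) (by linarith)]
      rw [hC2]
      nlinarith [mul_le_mul_of_nonneg_right hA (show (0:ℝ) ≤ 2 * M * (l + M) by positivity),
        mul_le_mul_of_nonneg_left (show l + M ≤ l + 2 * M by linarith)
          (show (0:ℝ) ≤ 2 * 2 ^ a₂ * φ' (l + M) * M by positivity)]
    linarith
  -- Claim B: change of shift
  have claimB : ∀ l mu M : ℝ, 0 ≤ l → 0 ≤ mu → 0 < M → l ≤ mu + M → mu ≤ l + M →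
      shiftedDeriv φ' l M ≤ C * shiftedDeriv φ' mu M := by
    intro l mu M hl hmu hM h1 h2
    have hA : φ' (l + M) ≤ 2 ^ a₂ * φ' (mu + M) := by
      calc φ' (l + M) ≤ φ' (2 * (mu + M)) :=
            hN.mono (Set.mem_Ici.2 (by linarith)) (Set.mem_Ici.2 (by linarith)) (by linarith)
        _ ≤ 2 ^ a₂ * φ' (mu + M) := hdbl (mu + M) (by linarith)
    have hB : 0 ≤ φ' (mu + M) := hnn _ (by linarith)
    have e1 : shiftedDeriv φ' l M = φ' (l + M) * M / (l + M) := by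
      unfold shiftedDeriv; ring
    have e2 : C * shiftedDeriv φ' mu M = C * φ' (mu + M) * M / (mu + M) := by
      unfold shiftedDeriv; ring
    rw [e1, e2, div_le_div_iff₀ (by linarith) (by linarith)]
    rw [hC2]
    nlinarith [mul_le_mul_of_nonneg_right hA (show (0:ℝ) ≤ M * (mu + M) by positivity),
      mul_le_mul_of_nonneg_left (show mu + M ≤ 2 * (l + M) by linarith)
        (show (0:ℝ) ≤ 2 ^ a₂ * φ' (mu + M) * M by positivity)]
  refine ⟨C * C, by positivity, ?_⟩
  intro P Q R
  set lam := ‖P‖ with hlam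
  set mu := ‖R‖ with hmu
  set u := ‖P - Q‖ with hu
  set v := ‖P - R‖ with hv
  set w := ‖Q - R‖ with hw
  have hlam0 : 0 ≤ lam := norm_nonneg _
  have hmu0 : 0 ≤ mu := norm_nonneg _
  have hu0 : 0 ≤ u := norm_nonneg _
  have hv0 : 0 ≤ v := norm_nonneg _
  have hw0 : 0 ≤ w := norm_nonneg _
  have htri : u ≤ v + w := by
    have h := norm_sub_le_norm_sub_add_norm_sub P R Q
    rw [norm_sub_rev R Q] at h
    exact h
  have habs : |lam - mu| ≤ v := abs_norm_sub_norm_le P R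
  have h1 : lam ≤ mu + v := by have := abs_le.1 habs; linarith [this.1, this.2]
  have h2 : mu ≤ lam + v := by have := abs_le.1 habs; linarith [(abs_le.1 habs).1, (abs_le.1 habs).2]
  have hRHSnn : 0 ≤ shiftedDeriv φ' mu v + shiftedDeriv φ' mu w :=
    add_nonneg (fnn _ _ hmu0 hv0) (fnn _ _ hmu0 hw0)
  rcases eq_or_lt_of_le hu0 with h0 | h0
  · rw [← h0]
    unfold shiftedDeriv
    rw [mul_zero]
    positivity
  · set M := max v w with hM
    have hvM : v ≤ M := le_max_left _ _
    have hwM : w ≤ M := le_max_right _ _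
    have hMpos : 0 < M := by
      have : 0 < v + w := lt_of_lt_of_le h0 htri
      cases' le_total v w with h h
      · have : 0 < w := by linarith
        exact lt_of_lt_of_le this hwM
      · have : 0 < v := by linarith
        exact lt_of_lt_of_le this hvM
    have step1 : shiftedDeriv φ' lam u ≤ C * shiftedDeriv φ' lam M :=
      claimA lam u M hlam0 h0 hMpos (by linarith)
    have step2 : shiftedDeriv φ' lam M ≤ C * shiftedDeriv φ' mu M :=
      claimB lam mu M hlam0 hmu0 hMpos (by linarith) (by linarith)
    have step3 : shiftedDeriv φ' mu M ≤ shiftedDeriv φ' mu v + shiftedDeriv φ' mu w := by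
      rcases max_choice v w with h | h
      · rw [hM, h]
        linarith [fnn mu w hmu0 hw0]
      · rw [hM, h]
        linarith [fnn mu v hmu0 hv0]
    calc shiftedDeriv φ' lam u ≤ C * shiftedDeriv φ' lam M := step1
      _ ≤ C * (C * shiftedDeriv φ' mu M) := by
          exact mul_le_mul_of_nonneg_left step2 hC.le
      _ = C * C * shiftedDeriv φ' mu M := by ring
      _ ≤ C * C * (shiftedDeriv φ' mu v + shiftedDeriv φ' mu w) := by
          exact mul_le_mul_of_nonneg_left step3 (by positivity)
end

section
/- Let $\phi$ be a $C^2$ N-function satisfying $c\,\phi'(t) \le t\phi''(t) \le C\,\phi'(t)$. Define $A(P) = \frac{\phi'(|P|)}{|P|} P$ for $P \in \mathbb{R}^{n\times m} \setminus \{0\}$. Then for all $P \ne 0$ and all $B \in \mathbb{R}^{n\times m}$, the bilinear form of the derivative satisfies $\sum_{i,j,k,l} B_{ij}\, \partial_{ij} A_{kl}(P)\, B_{kl} \ge \epsilon\, \phi''(|P|)\, |B|^2$ for some $\epsilon > 0$ depending only on $c$. -/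
open scoped RealInnerProductSpace

/-- Ellipticity of the `φ`-Laplacian: the bilinear form of the derivative of
`A(P) = φ'(|P|)/|P| · P` is bounded below by `ε φ''(|P|)|B|²`. -/
theorem phi_laplacian_ellipticity
    (n m : ℕ) (φ φ' φ'' : ℝ → ℝ) (c C : ℝ) (hc : 0 < c) (hcC : c ≤ C)
    (hφ' : ∀ t > (0 : ℝ), HasDerivAt φ (φ' t) t)
    (hφ'' : ∀ t > (0 : ℝ), HasDerivAt φ' (φ'' t) t)
    (hpos : ∀ t > (0 : ℝ), 0 < φ' t)
    (hassum : ∀ t > (0 : ℝ), c * φ' t ≤ t * φ'' t ∧ t * φ'' t ≤ C * φ' t) :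
    ∃ ε > (0 : ℝ), ∀ P : EuclideanSpace ℝ (Fin n × Fin m), P ≠ 0 →
      ∀ B : EuclideanSpace ℝ (Fin n × Fin m),
        ε * φ'' ‖P‖ * ‖B‖ ^ 2 ≤
          φ' ‖P‖ / ‖P‖ * (‖B‖ ^ 2 - ⟪P, B⟫ ^ 2 / ‖P‖ ^ 2) +
            φ'' ‖P‖ * (⟪P, B⟫ ^ 2 / ‖P‖ ^ 2) := by
  have hC : 0 < C := lt_of_lt_of_le hc hcC
  refine ⟨min (1/C) 1, lt_min (by positivity) one_pos, ?_⟩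
  intro P hP B
  have ht : (0:ℝ) < ‖P‖ := norm_pos_iff.mpr hP
  have hφ'p := hpos _ ht
  obtain ⟨h1, h2⟩ := hassum _ ht
  have hb : 0 < φ'' ‖P‖ := by nlinarith
  have hs1 : ⟪P, B⟫ ^ 2 ≤ ‖P‖ ^ 2 * ‖B‖ ^ 2 := by
    have h := abs_real_inner_le_norm P B
    nlinarith [sq_abs ⟪P, B⟫, abs_nonneg ⟪P, B⟫, norm_nonneg P, norm_nonneg B]
  set s := ⟪P, B⟫ ^ 2 / ‖P‖ ^ 2 with hsdef
  have hs0 : 0 ≤ s := by positivity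
  have hsB : s ≤ ‖B‖ ^ 2 := by
    rw [hsdef, div_le_iff₀ (by positivity)]; nlinarith
  have ha : φ'' ‖P‖ / C ≤ φ' ‖P‖ / ‖P‖ := by
    rw [div_le_div_iff₀ hC ht]; nlinarith
  have hε1 : min (1/C) 1 ≤ 1/C := min_le_left _ _
  have hε2 : min (1/C) 1 ≤ 1 := min_le_right _ _
  have hε0 : 0 < min (1/C) 1 := lt_min (by positivity) one_pos
  have key1 : min (1/C) 1 * φ'' ‖P‖ ≤ φ' ‖P‖ / ‖P‖ := by
    calc min (1/C) 1 * φ'' ‖P‖ ≤ (1/C) * φ'' ‖P‖ :=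
          mul_le_mul_of_nonneg_right hε1 hb.le
      _ = φ'' ‖P‖ / C := by ring
      _ ≤ φ' ‖P‖ / ‖P‖ := ha
  have key2 : min (1/C) 1 * φ'' ‖P‖ ≤ φ'' ‖P‖ := by nlinarith
  nlinarith [mul_le_mul_of_nonneg_right key1 (by nlinarith : (0:ℝ) ≤ ‖B‖ ^ 2 - s),
    mul_le_mul_of_nonneg_right key2 hs0]
end

section
/- Let $\phi$ be a $C^2$ N-function with $\Delta_2(\{\phi,\phi^*\}) < \infty$ satisfying $\phi'(t) \sim t\phi''(t)$. Define $A(P) = \frac{\phi'(|P|)}{|P|}P$. Then $|A(P) - A(Q)| \lesssim \phi''(|P| + |Q|)\, |P - Q|$ for all $P, Q \in \mathbb{R}^{n\times m}$ not both zero, with a constant depending only on the structural constants of $\phi$. -/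
open MeasureTheory Filter

open MeasureTheory Filter

lemma key_scalar (φ' φ'' : ℝ → ℝ) (a₂ : ℝ)
    (hmono : MonotoneOn φ' (Set.Ici 0)) (hzero : φ' 0 = 0)
    (hderiv : ∀ t > (0 : ℝ), HasDerivAt φ' (φ'' t) t)
    (ha₂ : 0 ≤ a₂)
    (hub : ∀ t > (0 : ℝ), 0 ≤ t * φ'' t ∧ t * φ'' t ≤ a₂ * φ' t)
    {s t : ℝ} (hs : 0 ≤ s) (hst : s ≤ t) (ht : 0 < t) :
    |φ' t / t * s - φ' s| ≤ 2 * (a₂ + 1) * (φ' t / t) * (t - s) := by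
  have hφt : 0 ≤ φ' t := by
    have := hmono (Set.mem_Ici.mpr le_rfl) (Set.mem_Ici.mpr ht.le) ht.le
    simpa [hzero] using this
  have hφs : 0 ≤ φ' s := by
    have := hmono (Set.mem_Ici.mpr le_rfl) (Set.mem_Ici.mpr hs) hs
    simpa [hzero] using this
  have hφst : φ' s ≤ φ' t := hmono (Set.mem_Ici.mpr hs) (Set.mem_Ici.mpr ht.le) hst
  have hftnn : 0 ≤ φ' t / t := div_nonneg hφt ht.le
  have hcanc : φ' t / t * t = φ' t := div_mul_cancel₀ _ ht.ne'
  rcases le_or_gt s (t / 2) with hhalf | hhalf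
  · -- crude bound
    have h1 : φ' t / t * s ≤ φ' t := by
      calc φ' t / t * s ≤ φ' t / t * t := by
            exact mul_le_mul_of_nonneg_left hst hftnn
        _ = φ' t := hcanc
    have h2 : |φ' t / t * s - φ' s| ≤ φ' t := by
      rw [abs_sub_le_iff]
      constructor
      · linarith
      · nlinarith [mul_nonneg hftnn hs]
    have h3 : φ' t ≤ 2 * (φ' t / t) * (t - s) := by nlinarith
    have h5 : 0 ≤ (φ' t / t) * (t - s) := mul_nonneg hftnn (by linarith)
    nlinarith
  · -- mean value theorem on g r = φ' r * (s * r⁻¹)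
    have hs0 : 0 < s := lt_trans (by linarith) hhalf
    set g : ℝ → ℝ := fun r => φ' r * (s * r⁻¹) with hg
    set g' : ℝ → ℝ := fun r => φ'' r * (s * r⁻¹) + φ' r * (s * -(r ^ 2)⁻¹) with hg'
    have hgd : ∀ r ∈ Set.Icc s t, HasDerivWithinAt g (g' r) (Set.Icc s t) r := by
      intro r hr
      have hr0 : 0 < r := lt_of_lt_of_le hs0 hr.1
      exact ((hderiv r hr0).mul ((hasDerivAt_inv hr0.ne').const_mul s)).hasDerivWithinAt
    have hC : ∀ r ∈ Set.Icc s t, ‖g' r‖ ≤ 2 * (a₂ + 1) * (φ' t / t) := by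
      intro r hr
      have hr0 : 0 < r := lt_of_lt_of_le hs0 hr.1
      have hrt : t / 2 < r := lt_of_lt_of_le hhalf hr.1
      have hφr : φ' r ≤ φ' t := hmono (Set.mem_Ici.mpr hr0.le) (Set.mem_Ici.mpr ht.le) hr.2
      have hφrnn : 0 ≤ φ' r := by
        have := hmono (Set.mem_Ici.mpr le_rfl) (Set.mem_Ici.mpr hr0.le) hr0.le
        simpa [hzero] using this
      obtain ⟨hub1, hub2⟩ := hub r hr0
      have hφ''r : 0 ≤ φ'' r := le_of_mul_le_mul_left (by simpa using hub1) hr0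
      have hu0 : 0 < r⁻¹ := inv_pos.mpr hr0
      have huu : r * r⁻¹ = 1 := mul_inv_cancel₀ hr0.ne'
      have hsr : s ≤ r := hr.1
      have hut : r⁻¹ ≤ 2 / t := by
        have h := (inv_anti₀ (half_pos ht) hrt.le)
        rwa [inv_div] at h
      -- rewrite g' r
      have hrep : g' r = φ'' r * (s * r⁻¹) - φ' r * (s * (r⁻¹ * r⁻¹)) := by
        simp only [hg', sq, mul_inv]; ring
      have hA : φ'' r * (s * r⁻¹) ≤ a₂ * (φ' t * r⁻¹) := by
        nlinarith [mul_nonneg (mul_nonneg hφ''r hu0.le) (sub_nonneg.mpr hsr),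
          mul_nonneg (sub_nonneg.mpr hub2) hu0.le,
          mul_nonneg (mul_nonneg ha₂ hu0.le) (sub_nonneg.mpr hφr)]
      have hruu : r * (r⁻¹ * r⁻¹) = r⁻¹ := by rw [← mul_assoc, huu, one_mul]
      have hB : φ' r * (s * (r⁻¹ * r⁻¹)) ≤ φ' t * r⁻¹ := by
        calc φ' r * (s * (r⁻¹ * r⁻¹)) ≤ φ' r * (r * (r⁻¹ * r⁻¹)) := by
              apply mul_le_mul_of_nonneg_left _ hφrnn
              exact mul_le_mul_of_nonneg_right hsr (by positivity)
          _ = φ' r * r⁻¹ := by rw [hruu]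
          _ ≤ φ' t * r⁻¹ := mul_le_mul_of_nonneg_right hφr hu0.le
      have hAnn : 0 ≤ φ'' r * (s * r⁻¹) := by positivity
      have hBnn : 0 ≤ φ' r * (s * (r⁻¹ * r⁻¹)) := by positivity
      have hfin : |g' r| ≤ (a₂ + 1) * (φ' t * r⁻¹) := by
        rw [hrep, abs_le]
        constructor <;> linarith [mul_nonneg hφt hu0.le]
      rw [Real.norm_eq_abs]
      calc |g' r| ≤ (a₂ + 1) * (φ' t * r⁻¹) := hfin
        _ ≤ (a₂ + 1) * (φ' t * (2 / t)) := by
            apply mul_le_mul_of_nonneg_left _ (by linarith)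
            exact mul_le_mul_of_nonneg_left hut hφt
        _ = 2 * (a₂ + 1) * (φ' t / t) := by ring
    have hmvt := Convex.norm_image_sub_le_of_norm_hasDerivWithin_le hgd hC (convex_Icc s t)
      (Set.mem_Icc.mpr ⟨le_rfl, hst⟩) (Set.mem_Icc.mpr ⟨hst, le_rfl⟩)
    have hgt : g t = φ' t / t * s := by simp only [hg]; field_simp
    have hgs : g s = φ' s := by
      simp only [hg, mul_inv_cancel₀ hs0.ne', mul_one]
    rw [hgt, hgs] at hmvt
    have hnorm : ‖t - s‖ = t - s := by
      rw [Real.norm_eq_abs, abs_of_nonneg (by linarith)]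
    rw [hnorm] at hmvt
    calc |φ' t / t * s - φ' s| = ‖φ' t / t * s - φ' s‖ := (Real.norm_eq_abs _).symm
      _ ≤ 2 * (a₂ + 1) * (φ' t / t) * (t - s) := hmvt

section Aux

variable {n m : ℕ}

lemma A_main_aux (n m : ℕ) (φ' φ'' : ℝ → ℝ) (a₁ a₂ : ℝ)
    (hmono : MonotoneOn φ' (Set.Ici 0)) (hzero : φ' 0 = 0)
    (hpos : ∀ t > (0 : ℝ), 0 < φ' t)
    (hderiv : ∀ t > (0 : ℝ), HasDerivAt φ' (φ'' t) t)
    (ha₁ : 0 < a₁) (ha₂ : 0 ≤ a₂)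
    (hassum : ∀ t > (0 : ℝ), a₁ * φ' t ≤ t * φ'' t ∧ t * φ'' t ≤ a₂ * φ' t)
    (hkey : ∀ {s t : ℝ}, 0 ≤ s → s ≤ t → 0 < t →
      |φ' t / t * s - φ' s| ≤ 2 * (a₂ + 1) * (φ' t / t) * (t - s))
    (P Q : EuclideanSpace ℝ (Fin n × Fin m)) (hle : ‖Q‖ ≤ ‖P‖) (hne : ¬(P = 0 ∧ Q = 0)) :
    ‖(φ' ‖P‖ / ‖P‖) • P - (φ' ‖Q‖ / ‖Q‖) • Q‖ ≤
      (4 * a₂ + 6) / a₁ * (φ'' (‖P‖ + ‖Q‖) * ‖P - Q‖) := by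
  set t := ‖P‖ with hT
  set s := ‖Q‖ with hS
  have hs : 0 ≤ s := norm_nonneg _
  have ht : 0 < t := by
    rcases eq_or_lt_of_le (norm_nonneg P) with h | h
    · exfalso
      apply hne
      have hP : P = 0 := norm_eq_zero.mp h.symm
      have hQ : Q = 0 := norm_eq_zero.mp (le_antisymm (by rw [← hT] at h; linarith) (norm_nonneg _))
      exact ⟨hP, hQ⟩
    · exact h
  have hφt : 0 < φ' t := hpos t ht
  have hftnn : 0 ≤ φ' t / t := div_nonneg hφt.le ht.le
  -- decomposition
  have hdecomp : (φ' t / t) • P - (φ' s / s) • Q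
      = (φ' t / t) • (P - Q) + ((φ' t / t) - (φ' s / s)) • Q := by
    module
  have hnormPQ : t - s ≤ ‖P - Q‖ := norm_sub_norm_le P Q
  have hPQnn : 0 ≤ ‖P - Q‖ := norm_nonneg _
  -- second term
  have hterm2 : ‖((φ' t / t) - (φ' s / s)) • Q‖ ≤ 2 * (a₂ + 1) * (φ' t / t) * (t - s) := by
    rw [norm_smul, Real.norm_eq_abs, ← hS]
    have h1 : |(φ' t / t) - (φ' s / s)| * s = |((φ' t / t) - (φ' s / s)) * s| := by
      rw [abs_mul, abs_of_nonneg hs]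
    rw [h1]
    have h2 : ((φ' t / t) - (φ' s / s)) * s = φ' t / t * s - φ' s := by
      rcases eq_or_lt_of_le hs with h | h
      · rw [← h, hzero]; ring
      · field_simp
    rw [h2]
    exact hkey hs hle ht
  -- combine
  have hstep1 : ‖(φ' t / t) • P - (φ' s / s) • Q‖ ≤ (2 * a₂ + 3) * ((φ' t / t) * ‖P - Q‖) := by
    rw [hdecomp]
    calc ‖(φ' t / t) • (P - Q) + ((φ' t / t) - (φ' s / s)) • Q‖
        ≤ ‖(φ' t / t) • (P - Q)‖ + ‖((φ' t / t) - (φ' s / s)) • Q‖ := norm_add_le _ _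
      _ ≤ (φ' t / t) * ‖P - Q‖ + 2 * (a₂ + 1) * (φ' t / t) * (t - s) := by
          rw [norm_smul, Real.norm_eq_abs, abs_of_nonneg hftnn]
          exact add_le_add le_rfl hterm2
      _ ≤ (φ' t / t) * ‖P - Q‖ + 2 * (a₂ + 1) * (φ' t / t) * ‖P - Q‖ := by
          apply add_le_add le_rfl
          apply mul_le_mul_of_nonneg_left hnormPQ (by positivity)
      _ = (2 * a₂ + 3) * ((φ' t / t) * ‖P - Q‖) := by ring
  -- bound φ' t / t by φ''(t+s)
  have hts : 0 < t + s := by linarith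
  obtain ⟨hl, _⟩ := hassum (t + s) hts
  have hφts : φ' t ≤ φ' (t + s) :=
    hmono (Set.mem_Ici.mpr ht.le) (Set.mem_Ici.mpr hts.le) (by linarith)
  have hφ''nn : 0 < φ'' (t + s) := by
    have h := hpos (t + s) hts
    nlinarith
  have hft : φ' t / t ≤ 2 * φ'' (t + s) / a₁ := by
    rw [div_le_div_iff₀ ht ha₁]
    nlinarith
  calc ‖(φ' t / t) • P - (φ' s / s) • Q‖
      ≤ (2 * a₂ + 3) * ((φ' t / t) * ‖P - Q‖) := hstep1
    _ ≤ (2 * a₂ + 3) * ((2 * φ'' (t + s) / a₁) * ‖P - Q‖) := by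
        apply mul_le_mul_of_nonneg_left _ (by linarith)
        exact mul_le_mul_of_nonneg_right hft hPQnn
    _ = (4 * a₂ + 6) / a₁ * (φ'' (t + s) * ‖P - Q‖) := by ring

end Aux

/-- Lipschitz-type estimate for `A(P) = φ'(|P|)/|P| · P`:
`|A(P) − A(Q)| ≲ φ''(|P|+|Q|) |P − Q|`. -/
theorem A_lipschitz_estimate
    (n m : ℕ) (φ' φ'' : ℝ → ℝ) (cφ cψ a₁ a₂ : ℝ) (hN : IsNFunctionDeriv φ')
    (hΔ2 : ∀ t ≥ (0 : ℝ), phiOf φ' (2 * t) ≤ cφ * phiOf φ' t)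
    (hΔ2conj : ∀ t ≥ (0 : ℝ), phiConj φ' (2 * t) ≤ cψ * phiConj φ' t)
    (hderiv : ∀ t > (0 : ℝ), HasDerivAt φ' (φ'' t) t)
    (ha₁ : 0 < a₁)
    (hassum : ∀ t > (0 : ℝ), a₁ * φ' t ≤ t * φ'' t ∧ t * φ'' t ≤ a₂ * φ' t) :
    ∃ K > (0 : ℝ), ∀ P Q : EuclideanSpace ℝ (Fin n × Fin m), ¬(P = 0 ∧ Q = 0) →
      ‖(φ' ‖P‖ / ‖P‖) • P - (φ' ‖Q‖ / ‖Q‖) • Q‖ ≤ K * (φ'' (‖P‖ + ‖Q‖) * ‖P - Q‖) := by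
  have ha₂ : a₁ ≤ a₂ := by
    obtain ⟨h1, h2⟩ := hassum 1 one_pos
    have := hN.pos 1 one_pos
    nlinarith
  have ha₂0 : 0 ≤ a₂ := le_trans ha₁.le ha₂
  have hub : ∀ t > (0 : ℝ), 0 ≤ t * φ'' t ∧ t * φ'' t ≤ a₂ * φ' t := by
    intro t ht
    obtain ⟨h1, h2⟩ := hassum t ht
    have := hN.pos t ht
    exact ⟨by nlinarith, h2⟩
  have hkey : ∀ {s t : ℝ}, 0 ≤ s → s ≤ t → 0 < t →
      |φ' t / t * s - φ' s| ≤ 2 * (a₂ + 1) * (φ' t / t) * (t - s) := fun hs hst ht =>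
    key_scalar φ' φ'' a₂ hN.mono hN.zero hderiv ha₂0 hub hs hst ht
  refine ⟨(4 * a₂ + 6) / a₁, by positivity, fun P Q hne => ?_⟩
  rcases le_total ‖Q‖ ‖P‖ with h | h
  · exact A_main_aux n m φ' φ'' a₁ a₂ hN.mono hN.zero hN.pos hderiv ha₁ ha₂0 hassum hkey
      P Q h hne
  · have := A_main_aux n m φ' φ'' a₁ a₂ hN.mono hN.zero hN.pos hderiv ha₁ ha₂0 hassum hkey
      Q P h (by tauto)
    rw [norm_sub_rev ((φ' ‖P‖ / ‖P‖) • P), norm_sub_rev P, add_comm ‖P‖]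
    exact this
end

section
/- Let $\phi$ be an N-function with $\Delta_2(\{\phi, \phi^*\}) < \infty$. For $P, Q \in \mathbb{R}^{n \times m}$, write $[P,Q]_s = sP + (1-s)Q$. Then $\int_0^1 \frac{\phi'(|[P,Q]_s|)}{|[P,Q]_s|}\,ds \sim \frac{\phi'(|P|+|Q|)}{|P|+|Q|}$, with constants depending only on the $\Delta_2$ constants, for all $P, Q$ not both zero. -/
open MeasureTheory Filter

namespace SegAux

open Set intervalIntegral Real

/-! ### Generic facts about monotone functions and their primitives -/

section Generic

variable {f : ℝ → ℝ}

lemma intInt_of_monoOn (hm : MonotoneOn f (Set.Ici 0)) {x y : ℝ}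
    (hx : 0 ≤ x) (hy : 0 ≤ y) : IntervalIntegrable f volume x y := by
  apply MonotoneOn.intervalIntegrable
  apply hm.mono
  intro z hz
  have : min x y ≤ z := by
    rcases hz with ⟨h1, _⟩
    exact h1
  exact le_trans (le_min hx hy) this

lemma integral_le_mul (hm : MonotoneOn f (Set.Ici 0)) (hnn : ∀ s, 0 ≤ s → 0 ≤ f s)
    {t : ℝ} (ht : 0 ≤ t) : ∫ s in (0:ℝ)..t, f s ≤ t * f t := by
  have h1 : ∫ s in (0:ℝ)..t, f s ≤ ∫ _s in (0:ℝ)..t, f t := by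
    refine integral_mono_on ht (intInt_of_monoOn hm le_rfl ht) intervalIntegrable_const ?_
    intro x hx
    exact hm hx.1 ht hx.2
  simpa using h1

lemma mul_le_integral (hm : MonotoneOn f (Set.Ici 0)) (hnn : ∀ s, 0 ≤ s → 0 ≤ f s)
    {t : ℝ} (ht : 0 ≤ t) : t * f t ≤ ∫ s in (0:ℝ)..(2*t), f s := by
  have h2t : (0:ℝ) ≤ 2 * t := by linarith
  have hsplit : ∫ s in (0:ℝ)..(2*t), f s
      = (∫ s in (0:ℝ)..t, f s) + ∫ s in t..(2*t), f s :=
    (integral_add_adjacent_intervals (intInt_of_monoOn hm le_rfl ht)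
      (intInt_of_monoOn hm ht h2t)).symm
  have h1 : (0:ℝ) ≤ ∫ s in (0:ℝ)..t, f s :=
    intervalIntegral.integral_nonneg ht (fun u hu => hnn u hu.1)
  have h2 : t * f t ≤ ∫ s in t..(2*t), f s := by
    have : ∫ _s in t..(2*t), f t ≤ ∫ s in t..(2*t), f s := by
      refine integral_mono_on (by linarith) intervalIntegrable_const
        (intInt_of_monoOn hm ht h2t) ?_
      intro x hx
      exact hm ht (le_trans ht hx.1) hx.1
    calc t * f t = (2*t - t) * f t := by ring
    _ ≤ ∫ s in t..(2*t), f s := by simpa using this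
  linarith [hsplit]

lemma integral_nonneg_of (hnn : ∀ s, 0 ≤ s → 0 ≤ f s) {t : ℝ} (ht : 0 ≤ t) :
    0 ≤ ∫ s in (0:ℝ)..t, f s :=
  intervalIntegral.integral_nonneg ht (fun u hu => hnn u hu.1)

lemma integral_pos_aux (hm : MonotoneOn f (Set.Ici 0)) (hnn : ∀ s, 0 ≤ s → 0 ≤ f s)
    {t : ℝ} (ht : 0 < t) (hft : 0 < f (t/2)) : 0 < ∫ s in (0:ℝ)..t, f s := by
  have := mul_le_integral hm hnn (t := t/2) (by linarith)
  have h2 : 2 * (t/2) = t := by ring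
  rw [h2] at this
  nlinarith

lemma doubling_of_Delta2 {c : ℝ} (hm : MonotoneOn f (Set.Ici 0))
    (hnn : ∀ s, 0 ≤ s → 0 ≤ f s) (h0 : f 0 = 0) (hc : 0 < c)
    (hΔ : ∀ t ≥ (0:ℝ), (∫ s in (0:ℝ)..(2*t), f s) ≤ c * ∫ s in (0:ℝ)..t, f s) :
    ∀ t ≥ (0:ℝ), f (2*t) ≤ (c^2/2) * f t := by
  intro t ht
  rcases eq_or_lt_of_le ht with h|h
  · simp [← h, h0]
  · have h2t : (0:ℝ) ≤ 2*t := by linarith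
    have A : (2*t) * f (2*t) ≤ ∫ s in (0:ℝ)..(2*(2*t)), f s := mul_le_integral hm hnn h2t
    have B : (∫ s in (0:ℝ)..(2*(2*t)), f s) ≤ c * ∫ s in (0:ℝ)..(2*t), f s := hΔ (2*t) h2t
    have C : (∫ s in (0:ℝ)..(2*t), f s) ≤ c * ∫ s in (0:ℝ)..t, f s := hΔ t ht
    have D : (∫ s in (0:ℝ)..t, f s) ≤ t * f t := integral_le_mul hm hnn ht
    have E : (2*t) * f (2*t) ≤ c^2 * (t * f t) := by nlinarith
    have hft : 0 ≤ f t := hnn t ht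
    rw [div_mul_eq_mul_div, le_div_iff₀ (by norm_num : (0:ℝ) < 2)]  at *
    nlinarith
end Generic

end SegAux

namespace SegAux

section Phi

variable {φ' : ℝ → ℝ}

lemma phi'_nonneg (hN : IsNFunctionDeriv φ') {t : ℝ} (ht : 0 ≤ t) : 0 ≤ φ' t := by
  rcases eq_or_lt_of_le ht with h|h
  · simp [← h, hN.zero]
  · exact (hN.pos t h).le

lemma cphi_pos (hN : IsNFunctionDeriv φ') {cφ : ℝ}
    (hΔ2 : ∀ t ≥ (0 : ℝ), phiOf φ' (2 * t) ≤ cφ * phiOf φ' t) : 0 < cφ := by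
  have h1 : 0 < phiOf φ' 1 := by
    refine integral_pos_aux hN.mono (fun s hs => phi'_nonneg hN hs) one_pos ?_
    exact hN.pos _ (by norm_num)
  have h2 : 0 < phiOf φ' (2*1) := by
    refine integral_pos_aux hN.mono (fun s hs => phi'_nonneg hN hs) (by norm_num) ?_
    exact hN.pos _ (by norm_num)
  have := hΔ2 1 (by norm_num)
  nlinarith

lemma phi'_doubling (hN : IsNFunctionDeriv φ') {cφ : ℝ}
    (hΔ2 : ∀ t ≥ (0 : ℝ), phiOf φ' (2 * t) ≤ cφ * phiOf φ' t) :
    ∀ t ≥ (0:ℝ), φ' (2*t) ≤ (cφ^2/2) * φ' t :=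
  doubling_of_Delta2 hN.mono (fun s hs => phi'_nonneg hN hs) hN.zero
    (cphi_pos hN hΔ2) hΔ2

/-! ### Facts about the conjugate derivative `phiInvDeriv` -/

lemma S_nonempty (hN : IsNFunctionDeriv φ') (u : ℝ) :
    {s : ℝ | 0 ≤ s ∧ u < φ' s}.Nonempty := by
  obtain ⟨N, hNs⟩ := eventually_atTop.1 (hN.tendsto_top.eventually_gt_atTop u)
  exact ⟨max N 0, le_max_right _ _, hNs _ (le_max_left _ _)⟩

lemma S_bddBelow (u : ℝ) : BddBelow {s : ℝ | 0 ≤ s ∧ u < φ' s} :=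
  ⟨0, fun s hs => hs.1⟩

lemma psi'_nonneg (hN : IsNFunctionDeriv φ') (u : ℝ) : 0 ≤ phiInvDeriv φ' u :=
  le_csInf (S_nonempty hN u) (fun s hs => hs.1)

lemma psi'_mono (hN : IsNFunctionDeriv φ') : Monotone (phiInvDeriv φ') := by
  intro u v huv
  refine csInf_le_csInf (S_bddBelow u) (S_nonempty hN v) ?_
  intro s hs
  exact ⟨hs.1, lt_of_le_of_lt huv hs.2⟩

lemma phi'_psi'_le (hN : IsNFunctionDeriv φ') {u : ℝ} (hu : 0 ≤ u) :
    φ' (phiInvDeriv φ' u) ≤ u := by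
  set s₀ := phiInvDeriv φ' u with hs₀
  have hs₀nn : 0 ≤ s₀ := psi'_nonneg hN u
  rcases eq_or_lt_of_le hs₀nn with h|h
  · rw [← h, hN.zero]; exact hu
  · have key : ∀ s, 0 ≤ s → s < s₀ → φ' s ≤ u := by
      intro s h1 h2
      by_contra hcon
      push_neg at hcon
      exact absurd (csInf_le (S_bddBelow u) ⟨h1, hcon⟩) (not_le.2 h2)
    have htend := hN.left_cont s₀ h
    refine le_of_tendsto htend ?_
    filter_upwards [self_mem_nhdsWithin, mem_nhdsWithin_of_mem_nhds (Ioi_mem_nhds h)]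
      with s hs1 hs2
    exact key s (le_of_lt hs2) hs1

lemma t_le_psi' (hN : IsNFunctionDeriv φ') {u t : ℝ} (ht : 0 ≤ t) (h : φ' t < u) :
    t ≤ phiInvDeriv φ' u := by
  refine le_csInf (S_nonempty hN u) ?_
  intro s hs
  by_contra hcon
  push_neg at hcon
  have : φ' s ≤ φ' t := hN.mono hs.1 ht hcon.le
  linarith [hs.2]

lemma psi'_zero (hN : IsNFunctionDeriv φ') : phiInvDeriv φ' 0 = 0 := by
  refine le_antisymm ?_ (psi'_nonneg hN 0)
  by_contra hcon
  push_neg at hcon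
  have h2 : phiInvDeriv φ' 0 ≤ phiInvDeriv φ' 0 / 2 :=
    csInf_le (S_bddBelow 0) ⟨by linarith, hN.pos _ (by linarith)⟩
  linarith

lemma one_le_psi' (hN : IsNFunctionDeriv φ') {u : ℝ} (h : φ' 1 < u) :
    1 ≤ phiInvDeriv φ' u :=
  t_le_psi' hN zero_le_one h

lemma phiConj_nonneg (hN : IsNFunctionDeriv φ') {t : ℝ} (ht : 0 ≤ t) :
    0 ≤ phiConj φ' t :=
  integral_nonneg_of (fun s hs => psi'_nonneg hN s) ht

lemma phiConj_lb (hN : IsNFunctionDeriv φ') {u : ℝ} (hu : 0 ≤ u) :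
    u * phiInvDeriv φ' u ≤ phiConj φ' (2*u) :=
  mul_le_integral ((psi'_mono hN).monotoneOn _) (fun s _ => psi'_nonneg hN s) hu

lemma phiConj_pos_of_large (hN : IsNFunctionDeriv φ') {u : ℝ}
    (hu : max (φ' 1 + 1) 1 ≤ u) : 0 < phiConj φ' (2*u) := by
  have h1 : 1 ≤ phiInvDeriv φ' u := by
    refine one_le_psi' hN ?_
    have := le_max_left (φ' 1 + 1) 1
    linarith [le_trans (le_max_left (φ' 1 + 1) 1) hu]
  have h2 : (0:ℝ) < u := lt_of_lt_of_le (lt_of_lt_of_le one_pos (le_max_right _ _)) hu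
  calc (0:ℝ) < u * 1 := by linarith
  _ ≤ u * phiInvDeriv φ' u := by nlinarith
  _ ≤ phiConj φ' (2*u) := phiConj_lb hN h2.le

lemma cpsi_pos (hN : IsNFunctionDeriv φ') {cψ : ℝ}
    (hΔ2conj : ∀ t ≥ (0 : ℝ), phiConj φ' (2 * t) ≤ cψ * phiConj φ' t) : 0 < cψ := by
  set U := max (φ' 1 + 1) 1 with hU
  have hU1 : (1:ℝ) ≤ U := le_max_right _ _
  have h1 : 0 < phiConj φ' (2*U) := phiConj_pos_of_large hN le_rfl
  have h2 : 0 < phiConj φ' (2*(2*U)) := by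
    refine phiConj_pos_of_large hN ?_
    linarith
  have := hΔ2conj (2*U) (by linarith)
  nlinarith

lemma psi'_pos (hN : IsNFunctionDeriv φ') {cψ : ℝ}
    (hΔ2conj : ∀ t ≥ (0 : ℝ), phiConj φ' (2 * t) ≤ cψ * phiConj φ' t)
    {u : ℝ} (hu : 0 < u) : 0 < phiInvDeriv φ' u := by
  by_contra hcon
  push_neg at hcon
  have hzero : phiInvDeriv φ' u = 0 := le_antisymm hcon (psi'_nonneg hN u)
  have hvanish : phiConj φ' u = 0 := by
    rw [phiConj]
    rw [intervalIntegral.integral_congr (g := fun _ => (0:ℝ)) ?_]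
    · simp
    · intro s hs
      rw [Set.uIcc_of_le hu.le] at hs
      have h1 : phiInvDeriv φ' s ≤ phiInvDeriv φ' u := psi'_mono hN hs.2
      have h2 : 0 ≤ phiInvDeriv φ' s := psi'_nonneg hN s
      simp only [hzero] at h1
      exact le_antisymm h1 h2
  have hall : ∀ j : ℕ, phiConj φ' (2^j * u) = 0 := by
    intro j
    induction j with
    | zero => simpa using hvanish
    | succ j ih =>
      have heq : (2:ℝ)^(j+1) * u = 2 * (2^j * u) := by ring
      have hle := hΔ2conj (2^j * u) (by positivity)
      have hnn : 0 ≤ phiConj φ' (2^(j+1) * u) := phiConj_nonneg hN (by positivity)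
      rw [heq]
      rw [ih, mul_zero] at hle
      rw [← heq] at hle ⊢
      exact le_antisymm hle hnn
  set U := max (φ' 1 + 1) 1 with hUdef
  have hU1 : (1:ℝ) ≤ U := le_max_right _ _
  obtain ⟨j, hj⟩ := pow_unbounded_of_one_lt (2*U/u) (by norm_num : (1:ℝ) < 2)
  have hju : 2*U ≤ 2^j * u := by
    rw [div_lt_iff₀ hu] at hj
    nlinarith
  have : 0 < phiConj φ' (2^j * u) := by
    have h2 : 0 < phiConj φ' (2*(2^j * u / 2)) := by
      refine phiConj_pos_of_large hN ?_
      have : U ≤ 2^j * u / 2 := by linarith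
      exact this
    have heq : 2*(2^j * u / 2) = 2^j * u := by ring
    rwa [heq] at h2
  rw [hall j] at this
  exact lt_irrefl _ this

end Phi

end SegAux

namespace SegAux

section Growth

variable {φ' : ℝ → ℝ} {K : ℝ}

lemma psi'_iter (hN : IsNFunctionDeriv φ') (hK0 : 0 ≤ K)
    (hd : ∀ u, 0 < u → phiInvDeriv φ' (2*u) ≤ K * phiInvDeriv φ' u) :
    ∀ (j : ℕ) (u : ℝ), 0 < u → phiInvDeriv φ' (2^j*u) ≤ K^j * phiInvDeriv φ' u := by
  intro j
  induction j with
  | zero => intro u hu; simp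
  | succ j ih =>
    intro u hu
    have h1 : (2:ℝ)^(j+1) * u = 2 * (2^j*u) := by ring
    rw [h1]
    calc phiInvDeriv φ' (2*(2^j*u)) ≤ K * phiInvDeriv φ' (2^j*u) := hd _ (by positivity)
    _ ≤ K * (K^j * phiInvDeriv φ' u) := by
        have h2 := ih u hu
        have h3 : (0:ℝ) ≤ phiInvDeriv φ' (2^j*u) := psi'_nonneg hN _
        nlinarith
    _ = K^(j+1) * phiInvDeriv φ' u := by ring

lemma phi'_shrink (hN : IsNFunctionDeriv φ') (hK0 : 0 < K)
    (hd : ∀ u, 0 < u → phiInvDeriv φ' (2*u) ≤ K * phiInvDeriv φ' u)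
    {t : ℝ} (ht : 0 < t) (j : ℕ) : φ' (t / K^j) ≤ 2 * φ' t / 2^j := by
  have hφt : 0 < φ' t := hN.pos t ht
  have hu : (0:ℝ) < 2 * φ' t / 2^j := by positivity
  have h1 : t ≤ phiInvDeriv φ' (2 * φ' t) := t_le_psi' hN ht.le (by linarith)
  have h2 : (2:ℝ) * φ' t = 2^j * (2 * φ' t / 2^j) := by
    field_simp
  have h3 : phiInvDeriv φ' (2 * φ' t) ≤ K^j * phiInvDeriv φ' (2 * φ' t / 2^j) := by
    have h3' := psi'_iter hN hK0.le hd j _ hu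
    rw [← h2] at h3'
    exact h3' 
  have h4 : t / K^j ≤ phiInvDeriv φ' (2 * φ' t / 2^j) := by
    rw [div_le_iff₀ (by positivity)]
    nlinarith
  have h5 : φ' (t / K^j) ≤ φ' (phiInvDeriv φ' (2 * φ' t / 2^j)) :=
    hN.mono (Set.mem_Ici.2 (by positivity)) (Set.mem_Ici.2 (psi'_nonneg hN _)) h4
  exact le_trans h5 (phi'_psi'_le hN hu.le)

lemma phi'_power (hN : IsNFunctionDeriv φ') (hK2 : 2 ≤ K)
    (hd : ∀ u, 0 < u → phiInvDeriv φ' (2*u) ≤ K * phiInvDeriv φ' u)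
    {a r : ℝ} (hr : 0 < r) (hra : r ≤ a) :
    φ' r ≤ 4 * (r/a) ^ (Real.log 2 / Real.log K) * φ' a := by
  set δ := Real.log 2 / Real.log K with hδ
  have hK1 : (1:ℝ) < K := by linarith
  have hK0 : (0:ℝ) < K := by linarith
  have ha : 0 < a := lt_of_lt_of_le hr hra
  set lam := a / r with hlam
  have hlam1 : 1 ≤ lam := (one_le_div hr).2 hra
  have hlam0 : 0 < lam := by linarith
  set j := ⌊Real.logb K lam⌋₊ with hj
  have hlognn : 0 ≤ Real.logb K lam := Real.logb_nonneg hK1 hlam1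
  have h1 : (K:ℝ)^j ≤ lam := by
    have h := Real.rpow_le_rpow_of_exponent_le hK1.le (Nat.floor_le hlognn)
    rwa [Real.rpow_natCast, Real.rpow_logb hK0 (by linarith) hlam0] at h
  have h2 : lam < K^(j+1) := by
    have h : (K:ℝ) ^ Real.logb K lam < K ^ (((j+1 : ℕ)):ℝ) := by
      apply Real.rpow_lt_rpow_of_exponent_lt hK1
      push_cast
      exact Nat.lt_floor_add_one _
    rwa [Real.rpow_natCast, Real.rpow_logb hK0 (by linarith) hlam0] at h
  have hra_j : r ≤ a / K^j := by
    rw [le_div_iff₀ (by positivity)]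
    calc r * K^j ≤ r * lam := by nlinarith
    _ = a := by rw [hlam]; field_simp
  have h3 : φ' r ≤ φ' (a / K^j) :=
    hN.mono (Set.mem_Ici.2 hr.le) (Set.mem_Ici.2 (by positivity)) hra_j
  have h4 : φ' (a / K^j) ≤ 2 * φ' a / 2^j := phi'_shrink hN hK0 hd ha j
  have hδ0 : 0 ≤ δ := div_nonneg (Real.log_nonneg one_le_two) (Real.log_nonneg hK1.le)
  have hKδ : K ^ δ = 2 := by
    rw [hδ, Real.rpow_def_of_pos hK0]
    have hlogK : Real.log K ≠ 0 := ne_of_gt (Real.log_pos hK1)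
    rw [show Real.log K * (Real.log 2 / Real.log K) = Real.log 2 by field_simp]
    exact Real.exp_log two_pos
  have h5 : lam ^ δ ≤ 2^(j+1) := by
    calc lam ^ δ ≤ ((K^(j+1) : ℝ)) ^ δ := Real.rpow_le_rpow hlam0.le h2.le hδ0
    _ = (2:ℝ)^(j+1) := by
        rw [← Real.rpow_natCast K (j+1), ← Real.rpow_mul hK0.le, mul_comm,
          Real.rpow_mul hK0.le, hKδ, Real.rpow_natCast]
  have hX : 0 < lam ^ δ := Real.rpow_pos_of_pos hlam0 δ
  have hT : (0:ℝ) < 2^j := by positivity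
  have hgoal_eq : (r/a) ^ δ = (lam ^ δ)⁻¹ := by
    rw [show r/a = lam⁻¹ by rw [hlam, inv_div], ← Real.rpow_neg_one lam,
      ← Real.rpow_mul hlam0.le, mul_comm, Real.rpow_mul hlam0.le, Real.rpow_neg_one]
  rw [hgoal_eq]
  have hφa : 0 ≤ φ' a := phi'_nonneg hN ha.le
  have h6 : 2 * φ' a / 2^j ≤ 4 * (lam ^ δ)⁻¹ * φ' a := by
    rw [div_le_iff₀ hT, ← mul_le_mul_iff_of_pos_right hX]
    have e : 4 * (lam^δ)⁻¹ * φ' a * 2^j * lam^δ = 4 * φ' a * 2^j := by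
      field_simp
    rw [e]
    have hpow : (2:ℝ)^(j+1) = 2 * 2^j := by ring
    nlinarith [mul_le_mul_of_nonneg_left h5 hφa]
  linarith

lemma key_pointwise (hN : IsNFunctionDeriv φ') (hK2 : 2 ≤ K)
    (hd : ∀ u, 0 < u → phiInvDeriv φ' (2*u) ≤ K * phiInvDeriv φ' u)
    {a r u : ℝ} (ha : 0 < a) (hra : r ≤ a) (hu : 0 < u) (hur : a/4 * u ≤ r) :
    φ' r / r ≤ 16 * (φ' a / a) * u ^ (Real.log 2 / Real.log K - 1) := by
  set δ := Real.log 2 / Real.log K with hδ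
  have hK1 : (1:ℝ) < K := by linarith
  have hδ0 : 0 < δ := div_pos (Real.log_pos one_lt_two) (Real.log_pos hK1)
  have hδ1 : δ ≤ 1 := by
    rw [hδ, div_le_one (Real.log_pos hK1)]
    exact Real.log_le_log (by norm_num) hK2
  have hr0 : 0 < r := lt_of_lt_of_le (by positivity) hur
  have h1 : φ' r ≤ 4 * (r/a)^δ * φ' a := phi'_power hN hK2 hd hr0 hra
  set x := r / a with hx
  have hx0 : 0 < x := by positivity
  have hxu : u/4 ≤ x := by
    rw [hx, le_div_iff₀ ha]
    nlinarith
  have hφa : 0 ≤ φ' a := phi'_nonneg hN ha.le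
  have h2 : φ' r / r ≤ (4 * x^δ * φ' a) / r := by
    apply div_le_div₀ (by positivity) h1 hr0 le_rfl
  have hxa : x * a = r := div_mul_cancel₀ r (ne_of_gt ha)
  have hx1 : x^(δ-1) = x^δ / x := by
    rw [Real.rpow_sub hx0, Real.rpow_one]
  have h3 : (4 * x^δ * φ' a) / r = 4 * φ' a / a * x^(δ-1) := by
    rw [hx1, ← hxa]
    field_simp
  have h44 : (4:ℝ)^(1-δ) = ((4:ℝ)^(δ-1))⁻¹ := by
    rw [← Real.rpow_neg (by norm_num : (0:ℝ) ≤ 4), neg_sub]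
  have h4 : x^(δ-1) ≤ u^(δ-1) * (4:ℝ)^(1-δ) := by
    have hstep : x^(δ-1) ≤ (u/4)^(δ-1) :=
      Real.rpow_le_rpow_of_nonpos (by positivity) hxu (by linarith)
    rw [Real.div_rpow hu.le (by norm_num : (0:ℝ) ≤ 4)] at hstep
    rw [h44]
    rw [div_eq_mul_inv] at hstep
    exact hstep
  have h5 : (4:ℝ)^(1-δ) ≤ 4 := by
    calc (4:ℝ)^(1-δ) ≤ (4:ℝ)^(1:ℝ) :=
      Real.rpow_le_rpow_of_exponent_le (by norm_num) (by linarith)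
    _ = 4 := Real.rpow_one 4
  have hun : 0 ≤ u^(δ-1) := Real.rpow_nonneg hu.le _
  calc φ' r / r ≤ (4 * x^δ * φ' a) / r := h2
  _ = 4 * φ' a / a * x^(δ-1) := h3
  _ ≤ 4 * φ' a / a * (u^(δ-1) * 4) := by
      have hcoef : 0 ≤ 4 * φ' a / a := by positivity
      have hb : x^(δ-1) ≤ u^(δ-1) * 4 := le_trans h4 (by nlinarith)
      exact mul_le_mul_of_nonneg_left hb hcoef
  _ = 16 * (φ' a / a) * u ^ (δ-1) := by ring

end Growth

end SegAux

namespace SegAux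

section RpowInt

open intervalIntegral

lemma abs_rpow_II_right {r c d e : ℝ} (hr : -1 < r) (hcd : c ≤ d) (hde : d ≤ e) :
    IntervalIntegrable (fun s => |s - c| ^ r) MeasureTheory.volume d e := by
  have h0 : IntervalIntegrable (fun x : ℝ => x ^ r) volume (d - c) (e - c) :=
    intervalIntegrable_rpow' hr
  have h1 : IntervalIntegrable (fun x : ℝ => (x - c) ^ r) volume d e := by
    have h := h0.comp_sub_right c
    simpa using h
  rw [intervalIntegrable_iff] at h1 ⊢
  refine h1.congr_fun ?_ measurableSet_uIoc
  intro s hs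
  rw [Set.uIoc_of_le hde] at hs
  have : (0:ℝ) ≤ s - c := by
    have := hs.1
    simp only [Set.mem_Ioc] at *
    linarith
  simp only
  rw [abs_of_nonneg this]

lemma abs_rpow_II_left {r c d e : ℝ} (hr : -1 < r) (hde : d ≤ e) (hec : e ≤ c) :
    IntervalIntegrable (fun s => |s - c| ^ r) MeasureTheory.volume d e := by
  have h0 : IntervalIntegrable (fun x : ℝ => x ^ r) volume (c - e) (c - d) :=
    intervalIntegrable_rpow' hr
  have h1 : IntervalIntegrable (fun x : ℝ => (c - x) ^ r) volume d e := by
    have h := (h0.comp_sub_left c).symm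
    simpa using h
  rw [intervalIntegrable_iff] at h1 ⊢
  refine h1.congr_fun ?_ measurableSet_uIoc
  intro s hs
  rw [Set.uIoc_of_le hde] at hs
  have hsc : s - c ≤ 0 := by
    simp only [Set.mem_Ioc] at hs
    linarith
  simp only
  rw [abs_of_nonpos hsc, neg_sub]

lemma abs_rpow_II {r : ℝ} (hr : -1 < r) (c : ℝ) :
    IntervalIntegrable (fun s => |s - c| ^ r) MeasureTheory.volume 0 1 := by
  rcases le_or_gt c 0 with h|h
  · exact abs_rpow_II_right hr h zero_le_one
  · rcases le_or_gt 1 c with h'|h'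
    · exact abs_rpow_II_left hr zero_le_one h'
    · exact (abs_rpow_II_left hr h.le le_rfl).trans (abs_rpow_II_right hr le_rfl h'.le)

lemma abs_rpow_integral_le {δ c' : ℝ} (hδ0 : 0 < δ) (hδ1 : δ ≤ 1)
    (hc0 : 0 ≤ c') (hc1 : c' ≤ 1) :
    ∫ s in (0:ℝ)..1, |s - c'| ^ (δ-1) ≤ 2/δ := by
  have hr : (-1:ℝ) < δ - 1 := by linarith
  have hII1 : IntervalIntegrable (fun s => |s - c'| ^ (δ-1)) volume 0 c' :=
    abs_rpow_II_left hr hc0 le_rfl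
  have hII2 : IntervalIntegrable (fun s => |s - c'| ^ (δ-1)) volume c' 1 :=
    abs_rpow_II_right hr le_rfl hc1
  have hsplit : ∫ s in (0:ℝ)..1, |s - c'| ^ (δ-1)
      = (∫ s in (0:ℝ)..c', |s - c'| ^ (δ-1)) + ∫ s in c'..1, |s - c'| ^ (δ-1) :=
    (integral_add_adjacent_intervals hII1 hII2).symm
  have hδ' : δ - 1 + 1 = δ := by ring
  have hval : ∀ b : ℝ, 0 ≤ b → b ≤ 1 → (∫ u in (0:ℝ)..b, u ^ (δ-1)) ≤ 1/δ := by
    intro b hb0 hb1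
    rw [integral_rpow (Or.inl hr), hδ']
    have h0 : (0:ℝ) ^ δ = 0 := Real.zero_rpow hδ0.ne'
    rw [h0, sub_zero]
    exact div_le_div₀ zero_le_one (Real.rpow_le_one hb0 hb1 hδ0.le) hδ0 le_rfl
  have h1 : (∫ s in (0:ℝ)..c', |s - c'| ^ (δ-1)) = ∫ u in (0:ℝ)..c', u ^ (δ-1) := by
    have e1 : (∫ s in (0:ℝ)..c', |s - c'| ^ (δ-1))
        = ∫ s in (0:ℝ)..c', (c' - s) ^ (δ-1) := by
      apply integral_congr
      intro s hs
      rw [Set.uIcc_of_le hc0] at hs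
      simp only
      rw [abs_of_nonpos (by linarith [hs.2] : s - c' ≤ 0), neg_sub]
    have e2 := integral_comp_sub_left (a := (0:ℝ)) (b := c')
      (fun u => u ^ (δ-1)) c'
    rw [e1, e2]
    norm_num
  have h2 : (∫ s in c'..1, |s - c'| ^ (δ-1)) = ∫ u in (0:ℝ)..(1-c'), u ^ (δ-1) := by
    have e1 : (∫ s in c'..1, |s - c'| ^ (δ-1))
        = ∫ s in c'..1, (s - c') ^ (δ-1) := by
      apply integral_congr
      intro s hs
      rw [Set.uIcc_of_le hc1] at hs
      simp only
      rw [abs_of_nonneg (by linarith [hs.1] : (0:ℝ) ≤ s - c')]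
    have e2 := integral_comp_sub_right (a := c') (b := (1:ℝ))
      (fun u => u ^ (δ-1)) c'
    rw [e1, e2]
    norm_num
  have hv1 := hval c' hc0 hc1
  have hv2 := hval (1-c') (by linarith) (by linarith)
  have : (1:ℝ)/δ + 1/δ = 2/δ := by ring
  rw [hsplit, h1, h2]
  linarith

end RpowInt

end SegAux

namespace SegAux

section Geometry

open scoped RealInnerProductSpace

variable {E : Type*} [NormedAddCommGroup E] [InnerProductSpace ℝ E]

lemma seg_eq (P Q : E) (s : ℝ) : s • P + (1 - s) • Q = Q + s • (P - Q) := by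
  rw [smul_sub, sub_smul, one_smul]
  abel

lemma seg_eq' (P Q : E) (s : ℝ) : P = (s • P + (1 - s) • Q) + (1 - s) • (P - Q) := by
  simp only [smul_sub, sub_smul, one_smul]
  abel

lemma seg_eq'' (P Q : E) (s : ℝ) : Q = (s • P + (1 - s) • Q) - s • (P - Q) := by
  simp only [smul_sub, sub_smul, one_smul]
  abel

lemma seg_norm_le (P Q : E) {s : ℝ} (h0 : 0 ≤ s) (h1 : s ≤ 1) :
    ‖s • P + (1 - s) • Q‖ ≤ ‖P‖ + ‖Q‖ := by
  calc ‖s • P + (1 - s) • Q‖ ≤ ‖s • P‖ + ‖(1-s) • Q‖ := norm_add_le _ _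
  _ = s * ‖P‖ + (1-s) * ‖Q‖ := by
      rw [norm_smul, norm_smul, Real.norm_eq_abs, Real.norm_eq_abs,
        abs_of_nonneg h0, abs_of_nonneg (by linarith : (0:ℝ) ≤ 1 - s)]
  _ ≤ ‖P‖ + ‖Q‖ := by nlinarith [norm_nonneg P, norm_nonneg Q]

lemma seg_norm_lb (P Q : E) (s : ℝ) :
    |s - (-(⟪Q, P - Q⟫ / ‖P - Q‖^2))| * ‖P - Q‖ ≤ ‖s • P + (1 - s) • Q‖ := by
  by_cases hv : P - Q = 0
  · simp [hv]
  · have hv2 : (0:ℝ) < ‖P - Q‖ := norm_pos_iff.2 hv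
    set v := P - Q with hvdef
    set q := ⟪Q, v⟫ with hq
    set c := -(q / ‖v‖^2) with hc
    have hcX : c * ‖v‖^2 = -q := by
      rw [hc]
      field_simp
    have hCS : q * q ≤ (‖Q‖ * ‖Q‖) * (‖v‖ * ‖v‖) := by
      have h := real_inner_mul_inner_self_le Q v
      rwa [real_inner_self_eq_norm_mul_norm, real_inner_self_eq_norm_mul_norm] at h
    have hsq : (|s - c| * ‖v‖)^2 ≤ ‖s • P + (1 - s) • Q‖^2 := by
      rw [seg_eq P Q s, norm_add_sq_real, real_inner_smul_right, norm_smul,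
        Real.norm_eq_abs, ← hvdef, ← hq]
      have e : (|s - c| * ‖v‖)^2 = (s - c)^2 * ‖v‖^2 := by
        rw [mul_pow, sq_abs]
      have e2 : (|s| * ‖v‖)^2 = s^2 * ‖v‖^2 := by
        rw [mul_pow, sq_abs]
      rw [e, e2]
      have hc2 : (c * ‖v‖^2)^2 = q^2 := by rw [hcX]; ring
      have hN : (0:ℝ) < ‖v‖^2 := by positivity
      have key : c^2 * ‖v‖^2 ≤ ‖Q‖^2 := by
        rw [← mul_le_mul_iff_of_pos_right hN]
        calc c^2*‖v‖^2*‖v‖^2 = (c*‖v‖^2)^2 := by ring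
        _ = q^2 := hc2
        _ ≤ ‖Q‖^2 * ‖v‖^2 := by nlinarith [hCS]
      have hsq2 : s*(c*‖v‖^2) = -(s*q) := by rw [hcX]; ring
      nlinarith [key, hsq2]
    have h1 : 0 ≤ |s - c| * ‖v‖ := by positivity
    have h2 := Real.sqrt_le_sqrt hsq
    rwa [Real.sqrt_sq h1, Real.sqrt_sq (norm_nonneg _)] at h2

lemma seg_norm_lbA (P Q : E) {s : ℝ} (h0 : 0 ≤ s) (h1 : s ≤ 1) :
    (‖P‖ + ‖Q‖)/2 - ‖P - Q‖ ≤ ‖s • P + (1 - s) • Q‖ := by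
  have hs1 : |s| = s := abs_of_nonneg h0
  have hs2 : |1 - s| = 1 - s := abs_of_nonneg (by linarith)
  rcases le_total ‖P‖ ‖Q‖ with h|h
  · have he := seg_eq'' P Q s
    have hn : ‖Q‖ ≤ ‖s • P + (1 - s) • Q‖ + ‖s • (P - Q)‖ := by
      calc ‖Q‖ = ‖(s • P + (1 - s) • Q) - s • (P - Q)‖ := by rw [← he]
      _ ≤ ‖s • P + (1 - s) • Q‖ + ‖s • (P - Q)‖ := norm_sub_le _ _
    rw [norm_smul, Real.norm_eq_abs, hs1] at hn
    nlinarith [norm_nonneg (P - Q)]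
  · have he := seg_eq' P Q s
    have hn : ‖P‖ ≤ ‖s • P + (1 - s) • Q‖ + ‖(1 - s) • (P - Q)‖ := by
      calc ‖P‖ = ‖(s • P + (1 - s) • Q) + (1 - s) • (P - Q)‖ := by rw [← he]
      _ ≤ ‖s • P + (1 - s) • Q‖ + ‖(1 - s) • (P - Q)‖ := norm_add_le _ _
    rw [norm_smul, Real.norm_eq_abs, hs2] at hn
    nlinarith [norm_nonneg (P - Q)]

lemma seg_norm_ge_right (P Q : E) (hQP : ‖Q‖ ≤ ‖P‖) {s : ℝ}
    (h34 : 3/4 ≤ s) (h1 : s ≤ 1) :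
    (‖P‖ + ‖Q‖)/4 ≤ ‖s • P + (1 - s) • Q‖ := by
  have e : (s • P + (1 - s) • Q) - (1 - s) • Q = s • P := by abel
  have hn : ‖s • P‖ ≤ ‖s • P + (1 - s) • Q‖ + ‖(1 - s) • Q‖ := by
    calc ‖s • P‖ = ‖(s • P + (1 - s) • Q) - (1 - s) • Q‖ := by rw [e]
    _ ≤ _ := norm_sub_le _ _
  rw [norm_smul, norm_smul, Real.norm_eq_abs, Real.norm_eq_abs,
    abs_of_nonneg (by linarith : (0:ℝ) ≤ s),
    abs_of_nonneg (by linarith : (0:ℝ) ≤ 1 - s)] at hn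
  nlinarith [mul_nonneg (by linarith : (0:ℝ) ≤ s - 3/4) (norm_nonneg P),
    mul_nonneg (by linarith : (0:ℝ) ≤ 1/4 - (1-s)) (norm_nonneg Q),
    norm_nonneg P, norm_nonneg Q]

lemma seg_norm_ge_left (P Q : E) (hPQ : ‖P‖ ≤ ‖Q‖) {s : ℝ}
    (h0 : 0 ≤ s) (h14 : s ≤ 1/4) :
    (‖P‖ + ‖Q‖)/4 ≤ ‖s • P + (1 - s) • Q‖ := by
  have e : (s • P + (1 - s) • Q) - s • P = (1 - s) • Q := by abel
  have hn : ‖(1 - s) • Q‖ ≤ ‖s • P + (1 - s) • Q‖ + ‖s • P‖ := by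
    calc ‖(1 - s) • Q‖ = ‖(s • P + (1 - s) • Q) - s • P‖ := by rw [e]
    _ ≤ _ := norm_sub_le _ _
  rw [norm_smul, norm_smul, Real.norm_eq_abs, Real.norm_eq_abs,
    abs_of_nonneg (by linarith : (0:ℝ) ≤ s),
    abs_of_nonneg (by linarith : (0:ℝ) ≤ 1 - s)] at hn
  nlinarith [mul_nonneg (by linarith : (0:ℝ) ≤ 1/4 - s) (norm_nonneg Q),
    mul_nonneg (by linarith : (0:ℝ) ≤ 1/4 - s) (norm_nonneg P),
    norm_nonneg P, norm_nonneg Q]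

end Geometry

end SegAux

set_option maxHeartbeats 2000000 in
/-- Average of `φ'(|·|)/|·|` over the segment `[P,Q]` is comparable to its value
at `|P| + |Q|` (Diening–Ettwein, Lemma 20). -/
theorem segment_average_equiv
    (n m : ℕ) (φ' : ℝ → ℝ) (cφ cψ : ℝ) (hN : IsNFunctionDeriv φ')
    (hΔ2 : ∀ t ≥ (0 : ℝ), phiOf φ' (2 * t) ≤ cφ * phiOf φ' t)
    (hΔ2conj : ∀ t ≥ (0 : ℝ), phiConj φ' (2 * t) ≤ cψ * phiConj φ' t) :
    ∃ c₁ > (0 : ℝ), ∃ c₂ > (0 : ℝ),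
      ∀ P Q : EuclideanSpace ℝ (Fin n × Fin m), ¬(P = 0 ∧ Q = 0) →
        c₁ * (φ' (‖P‖ + ‖Q‖) / (‖P‖ + ‖Q‖)) ≤
            (∫ s in (0 : ℝ)..1, φ' ‖s • P + (1 - s) • Q‖ / ‖s • P + (1 - s) • Q‖) ∧
          (∫ s in (0 : ℝ)..1, φ' ‖s • P + (1 - s) • Q‖ / ‖s • P + (1 - s) • Q‖) ≤
            c₂ * (φ' (‖P‖ + ‖Q‖) / (‖P‖ + ‖Q‖)) := by
  classical
  have hcφ : 0 < cφ := SegAux.cphi_pos hN hΔ2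
  have hcψ : 0 < cψ := SegAux.cpsi_pos hN hΔ2conj
  set D : ℝ := cφ^2/2 with hD
  have hD0 : 0 < D := by positivity
  have hdφ : ∀ t ≥ (0:ℝ), φ' (2*t) ≤ D * φ' t := SegAux.phi'_doubling hN hΔ2
  set K : ℝ := max 2 (cψ^2/2) with hK
  have hK2 : 2 ≤ K := le_max_left _ _
  have hK1 : (1:ℝ) < K := by linarith
  have hdψ : ∀ u, 0 < u → phiInvDeriv φ' (2*u) ≤ K * phiInvDeriv φ' u := by
    intro u hu
    have h1 := SegAux.doubling_of_Delta2 ((SegAux.psi'_mono hN).monotoneOn _)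
        (fun s _ => SegAux.psi'_nonneg hN s) (SegAux.psi'_zero hN) hcψ hΔ2conj u hu.le
    have h2 : cψ^2/2 ≤ K := le_max_right _ _
    have h3 : 0 ≤ phiInvDeriv φ' u := SegAux.psi'_nonneg hN u
    nlinarith
  set δ : ℝ := Real.log 2 / Real.log K with hδ
  have hδ0 : 0 < δ := div_pos (Real.log_pos one_lt_two) (Real.log_pos hK1)
  have hδ1 : δ ≤ 1 := by
    rw [hδ, div_le_one (Real.log_pos hK1)]
    exact Real.log_le_log (by norm_num) hK2
  refine ⟨1/(4*D^2), by positivity, 4 + 32/δ, by positivity, ?_⟩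
  intro P Q hPQ
  set a : ℝ := ‖P‖ + ‖Q‖ with ha
  have ha0 : 0 < a := by
    rcases lt_or_ge 0 a with h|h
    · exact h
    · exfalso
      apply hPQ
      constructor
      · rw [← norm_eq_zero]
        have := norm_nonneg P
        have := norm_nonneg Q
        linarith
      · rw [← norm_eq_zero]
        have := norm_nonneg P
        have := norm_nonneg Q
        linarith
  set F : ℝ → ℝ := fun s => φ' ‖s • P + (1 - s) • Q‖ / ‖s • P + (1 - s) • Q‖ with hFdef
  set R : ℝ → ℝ := fun s => ‖s • P + (1 - s) • Q‖ with hRdef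
  have hFR : ∀ s, F s = φ' (R s) / R s := by
    intro s
    rw [hFdef, hRdef]
  have hRnn : ∀ s, 0 ≤ R s := fun s => norm_nonneg _
  have hRcont : Continuous R := by
    rw [hRdef]
    apply Continuous.norm
    exact (continuous_id.smul continuous_const).add
      ((continuous_const.sub continuous_id).smul continuous_const)
  have hφm : Monotone (fun t => φ' (max t 0)) := by
    intro x y hxy
    exact hN.mono (Set.mem_Ici.2 (le_max_right x 0)) (Set.mem_Ici.2 (le_max_right y 0))
      (max_le_max hxy le_rfl)
  have hFmeas : Measurable F := by
    have hFalt : F = fun s => (fun t => φ' (max t 0)) (R s) / R s := by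
      funext s
      simp only [hFR, max_eq_left (hRnn s)]
    rw [hFalt]
    exact (hφm.measurable.comp hRcont.measurable).div hRcont.measurable
  have hFnn : ∀ s, 0 ≤ F s := fun s =>
    div_nonneg (SegAux.phi'_nonneg hN (hRnn s)) (hRnn s)
  have hRle : ∀ s, 0 ≤ s → s ≤ 1 → R s ≤ a := fun s h0 h1 => SegAux.seg_norm_le P Q h0 h1
  have hφa0 : 0 ≤ φ' a := SegAux.phi'_nonneg hN ha0.le
  have hAnn : 0 ≤ φ' a / a := div_nonneg hφa0 ha0.le
  -- upper bound and integrability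
  have main_upper : IntervalIntegrable F volume 0 1 ∧
      (∫ s in (0:ℝ)..1, F s) ≤ (4 + 32/δ) * (φ' a / a) := by
    rcases le_or_gt ‖P - Q‖ (a/4) with hcase|hcase
    · -- Case A : the segment stays far from the origin
      have hlb : ∀ s, 0 ≤ s → s ≤ 1 → a/4 ≤ R s := by
        intro s h0 h1
        have h := SegAux.seg_norm_lbA P Q h0 h1
        rw [hRdef]
        simp only
        linarith
      have hpt : ∀ s ∈ Set.Icc (0:ℝ) 1, F s ≤ 4 * φ' a / a := by
        intro s hs
        have h1 : φ' (R s) ≤ φ' a := hN.mono (Set.mem_Ici.2 (hRnn s))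
          (Set.mem_Ici.2 ha0.le) (hRle s hs.1 hs.2)
        have h2 : a/4 ≤ R s := hlb s hs.1 hs.2
        rw [hFR]
        calc φ' (R s) / R s ≤ φ' a / (a/4) := div_le_div₀ hφa0 h1 (by linarith) h2
        _ = 4 * φ' a / a := by
            field_simp
      have hII : IntervalIntegrable F volume 0 1 := by
        apply IntervalIntegrable.mono_fun' (g := fun _ => 4 * φ' a / a)
          intervalIntegrable_const (hFmeas.aestronglyMeasurable.restrict)
        filter_upwards [MeasureTheory.ae_restrict_mem measurableSet_uIoc] with s hs
        rw [Real.norm_eq_abs, abs_of_nonneg (hFnn s)]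
        rw [Set.uIoc_of_le zero_le_one] at hs
        exact hpt s ⟨hs.1.le, hs.2⟩
      refine ⟨hII, ?_⟩
      have hmono := intervalIntegral.integral_mono_on zero_le_one hII
        intervalIntegrable_const hpt
      rw [intervalIntegral.integral_const] at hmono
      simp only [sub_zero, one_smul, smul_eq_mul] at hmono
      have h32 : 0 < 32/δ := by positivity
      have e : 4 * φ' a / a = 4 * (φ' a / a) := by ring
      rw [e] at hmono
      nlinarith
    · -- Case B : use the quantitative convexity of the norm along the segment
      have hvpos : (0:ℝ) < ‖P - Q‖ := lt_of_le_of_lt (by positivity) hcase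
      set c : ℝ := -((inner ℝ Q (P - Q) : ℝ) / ‖P - Q‖^2) with hc
      set c' : ℝ := max 0 (min 1 c) with hc'
      have hc'0 : 0 ≤ c' := le_max_left _ _
      have hc'1 : c' ≤ 1 := max_le zero_le_one (min_le_left _ _)
      have hclamp : ∀ s, 0 ≤ s → s ≤ 1 → |s - c'| ≤ |s - c| := by
        intro s hs0 hs1
        rcases le_or_gt c 0 with h|h
        · have hcc : c' = 0 := by
            rw [hc', max_eq_left ((min_le_right _ _).trans h)]
          rw [hcc, sub_zero, abs_of_nonneg hs0,
            abs_of_nonneg (by linarith : (0:ℝ) ≤ s - c)]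
          linarith
        · rcases le_or_gt c 1 with h1|h1
          · have hcc : c' = c := by
              rw [hc', min_eq_right h1, max_eq_right h.le]
            rw [hcc]
          · have hcc : c' = 1 := by
              rw [hc', min_eq_left h1.le, max_eq_right zero_le_one]
            rw [hcc, abs_of_nonpos (by linarith : s - 1 ≤ 0),
              abs_of_nonpos (by linarith : s - c ≤ 0)]
            linarith
      set G : ℝ → ℝ := fun s => 16 * (φ' a / a) * |s - c'| ^ (δ-1) with hG
      have hGII : IntervalIntegrable G volume 0 1 :=
        (SegAux.abs_rpow_II (by linarith) c').const_mul _
      have hpt : ∀ s ∈ Set.Icc (0:ℝ) 1, s ≠ c → s ≠ c' → F s ≤ G s := by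
        intro s hs hsc hsc'
        have hu0 : 0 < |s - c| := abs_pos.2 (sub_ne_zero.2 hsc)
        have hRlb : a/4 * |s - c| ≤ R s := by
          have hlb := SegAux.seg_norm_lb P Q s
          rw [hRdef]
          simp only
          calc a/4 * |s - c| ≤ ‖P - Q‖ * |s - c| := by nlinarith
          _ = |s - c| * ‖P - Q‖ := by ring
          _ ≤ _ := hlb
        have hkey := SegAux.key_pointwise hN hK2 hdψ ha0 (hRle s hs.1 hs.2) hu0 hRlb
        have hmono : |s - c| ^ (δ-1) ≤ |s - c'| ^ (δ-1) :=
          Real.rpow_le_rpow_of_nonpos (abs_pos.2 (sub_ne_zero.2 hsc'))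
            (hclamp s hs.1 hs.2) (by linarith)
        rw [hFR]
        calc φ' (R s) / R s ≤ 16 * (φ' a / a) * |s - c| ^ (δ-1) := hkey
        _ ≤ G s := mul_le_mul_of_nonneg_left hmono (by positivity)
      have haec : ∀ᵐ s : ℝ, s ≠ c := by
        refine (MeasureTheory.measure_eq_zero_iff_ae_notMem.mp (measure_singleton c)).mono ?_
        intro s hs
        simpa using hs
      have haec' : ∀ᵐ s : ℝ, s ≠ c' := by
        refine (MeasureTheory.measure_eq_zero_iff_ae_notMem.mp (measure_singleton c')).mono ?_
        intro s hs
        simpa using hs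
      have hII : IntervalIntegrable F volume 0 1 := by
        apply IntervalIntegrable.mono_fun' hGII (hFmeas.aestronglyMeasurable.restrict)
        filter_upwards [MeasureTheory.ae_restrict_mem measurableSet_uIoc,
          MeasureTheory.ae_restrict_of_ae haec, MeasureTheory.ae_restrict_of_ae haec']
          with s h1 h2 h3
        rw [Real.norm_eq_abs, abs_of_nonneg (hFnn s)]
        rw [Set.uIoc_of_le zero_le_one] at h1
        exact hpt s ⟨h1.1.le, h1.2⟩ h2 h3
      refine ⟨hII, ?_⟩
      have hle : (∫ s in (0:ℝ)..1, F s) ≤ ∫ s in (0:ℝ)..1, G s := by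
        apply intervalIntegral.integral_mono_ae_restrict zero_le_one hII hGII
        filter_upwards [MeasureTheory.ae_restrict_mem measurableSet_Icc,
          MeasureTheory.ae_restrict_of_ae haec, MeasureTheory.ae_restrict_of_ae haec']
          with s h1 h2 h3
        exact hpt s h1 h2 h3
      have hGval : (∫ s in (0:ℝ)..1, G s) ≤ 16 * (φ' a / a) * (2/δ) := by
        rw [hG]
        rw [intervalIntegral.integral_const_mul]
        exact mul_le_mul_of_nonneg_left
          (SegAux.abs_rpow_integral_le hδ0 hδ1 hc'0 hc'1) (by positivity)
      have e : 16 * (φ' a / a) * (2/δ) = 32/δ * (φ' a / a) := by ring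
      have h4 : 0 ≤ 4 * (φ' a / a) := by positivity
      calc (∫ s in (0:ℝ)..1, F s) ≤ 16 * (φ' a / a) * (2/δ) := le_trans hle hGval
      _ = 32/δ * (φ' a / a) := e
      _ ≤ (4 + 32/δ) * (φ' a / a) := by nlinarith
  obtain ⟨hII, hupper⟩ := main_upper
  -- lower bound
  have hq : φ' a ≤ D^2 * φ' (a/4) := by
    have h2 := hdφ (a/2) (by linarith)
    have h3 := hdφ (a/4) (by linarith)
    calc φ' a = φ' (2*(a/2)) := by congr 1; ring
    _ ≤ D * φ' (a/2) := h2
    _ = D * φ' (2*(a/4)) := by rw [show (2:ℝ)*(a/4) = a/2 by ring]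
    _ ≤ D * (D * φ' (a/4)) := mul_le_mul_of_nonneg_left h3 hD0.le
    _ = D^2 * φ' (a/4) := by ring
  have hφ4nn : 0 ≤ φ' (a/4) := SegAux.phi'_nonneg hN (by linarith)
  have hlow_aux : ∀ u v : ℝ, 0 ≤ u → u ≤ v → v ≤ 1 →
      (∀ s, u ≤ s → s ≤ v → a/4 ≤ R s) →
      (v - u) * (φ' (a/4) / a) ≤ ∫ s in (0:ℝ)..1, F s := by
    intro u v hu huv hv1 hgood
    have hsub1 : IntervalIntegrable F volume 0 u := by
      apply hII.mono_set'
      rw [Set.uIoc_of_le hu, Set.uIoc_of_le zero_le_one]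
      exact Set.Ioc_subset_Ioc le_rfl (by linarith)
    have hsub2 : IntervalIntegrable F volume u v := by
      apply hII.mono_set'
      rw [Set.uIoc_of_le huv, Set.uIoc_of_le zero_le_one]
      exact Set.Ioc_subset_Ioc hu hv1
    have hsub3 : IntervalIntegrable F volume v 1 := by
      apply hII.mono_set'
      rw [Set.uIoc_of_le hv1, Set.uIoc_of_le zero_le_one]
      exact Set.Ioc_subset_Ioc (by linarith) le_rfl
    have hsplit : (∫ s in (0:ℝ)..1, F s)
        = (∫ s in (0:ℝ)..u, F s) + ((∫ s in u..v, F s) + ∫ s in v..1, F s) := by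
      rw [intervalIntegral.integral_add_adjacent_intervals hsub2 hsub3,
        intervalIntegral.integral_add_adjacent_intervals hsub1 (hsub2.trans hsub3)]
    have h1 : 0 ≤ ∫ s in (0:ℝ)..u, F s :=
      intervalIntegral.integral_nonneg hu (fun s _ => hFnn s)
    have h3 : 0 ≤ ∫ s in v..1, F s :=
      intervalIntegral.integral_nonneg hv1 (fun s _ => hFnn s)
    have h2 : (v - u) * (φ' (a/4) / a) ≤ ∫ s in u..v, F s := by
      have hptl : ∀ s ∈ Set.Icc u v, φ' (a/4) / a ≤ F s := by
        intro s hs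
        have hgs := hgood s hs.1 hs.2
        have hs0 : 0 ≤ s := le_trans hu hs.1
        have hs1 : s ≤ 1 := le_trans hs.2 hv1
        have hRpos : 0 < R s := by linarith
        have hφle : φ' (a/4) ≤ φ' (R s) :=
          hN.mono (Set.mem_Ici.2 (by linarith : (0:ℝ) ≤ a/4))
            (Set.mem_Ici.2 (hRnn s)) hgs
        rw [hFR]
        exact div_le_div₀ (SegAux.phi'_nonneg hN (hRnn s)) hφle hRpos (hRle s hs0 hs1)
      have := intervalIntegral.integral_mono_on huv intervalIntegrable_const hsub2 hptl
      rw [intervalIntegral.integral_const] at this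
      simpa [smul_eq_mul] using this
    linarith
  constructor
  · -- lower estimate
    have hkey : (1:ℝ)/4 * (φ' (a/4) / a) ≤ ∫ s in (0:ℝ)..1, F s := by
      rcases le_total ‖Q‖ ‖P‖ with hcmp|hcmp
      · have h := hlow_aux (3/4) 1 (by norm_num) (by norm_num) le_rfl ?_
        · calc (1:ℝ)/4 * (φ' (a/4) / a) = (1 - 3/4) * (φ' (a/4) / a) := by norm_num
          _ ≤ _ := h
        · intro s h34 h1s
          exact SegAux.seg_norm_ge_right P Q hcmp h34 h1s
      · have h := hlow_aux 0 (1/4) le_rfl (by norm_num) (by norm_num) ?_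
        · calc (1:ℝ)/4 * (φ' (a/4) / a) = (1/4 - 0) * (φ' (a/4) / a) := by norm_num
          _ ≤ _ := h
        · intro s h0s h14s
          exact SegAux.seg_norm_ge_left P Q hcmp h0s h14s
    have hcmp2 : 1/(4*D^2) * (φ' a / a) ≤ (1:ℝ)/4 * (φ' (a/4) / a) := by
      have hdiv : φ' a / a ≤ D^2 * (φ' (a/4)/a) := by
        rw [← mul_div_assoc]
        exact div_le_div₀ (mul_nonneg (by positivity) hφ4nn) hq ha0 le_rfl
      have h1 : 1/(4*D^2) * (φ' a / a) ≤ 1/(4*D^2) * (D^2 * (φ' (a/4)/a)) :=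
        mul_le_mul_of_nonneg_left hdiv (by positivity)
      have h2 : 1/(4*D^2) * (D^2 * (φ' (a/4)/a)) = 1/4 * (φ' (a/4)/a) := by
        field_simp
      linarith
    exact le_trans hcmp2 hkey
  · exact hupper
end
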